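/- arXiv:0803.1659 — 5 statements merged into one kernel-verified Lean document; each statement's English description precedes it below -/
import Mathlib

section
/- Let A ⊆ ℂ be nonempty, connected and open, let F be a polynomial in variables {z_v : v ∈ V} that is A-nonvanishing, and let w ∈ V. If z_w is fixed at a complex value ξ in the closure of A, then the resulting polynomial in the variables {z_v : v ∈ V \ {w}} is A-nonvanishing. -/
open MvPolynomial

noncomputable abbrev Complex.abs : AbsoluteValue ℂ ℝ := NormedField.toAbsoluteValue ℂ

lemma Complex.continuous_abs : Continuous Complex.abs := continuous_norm

lemma Complex.norm_eq_abs (z : ℂ) : ‖z‖ = Complex.abs z := rfl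



private lemma multiset_prod_le {s : Multiset ℂ} {f g : ℂ → ℝ}
    (h0 : ∀ a, 0 ≤ f a) (h1 : ∀ a, 0 ≤ g a) (h : ∀ a ∈ s, f a ≤ g a) :
    (s.map f).prod ≤ (s.map g).prod := by
  induction s using Multiset.induction_on with
  | empty => simp
  | cons a s ih =>
    simp only [Multiset.map_cons, Multiset.prod_cons]
    refine mul_le_mul (h a (Multiset.mem_cons_self a s))
      (ih fun b hb => h b (Multiset.mem_cons_of_mem hb)) ?_ (h1 a)
    exact Multiset.prod_nonneg (by
      intro x hx
      obtain ⟨b, hb, rfl⟩ := Multiset.mem_map.mp hx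
      exact h0 b)

private lemma disc_bound (p : Polynomial ℂ)
    (hp : ∀ r ∈ p.roots, 1 ≤ Complex.abs r) (t : ℂ) (ht : Complex.abs t ≤ 1) :
    Complex.abs (p.eval t) ≤ 2 ^ p.natDegree * Complex.abs (p.eval 0) := by
  rcases eq_or_ne p 0 with rfl | hp0
  · simp
  have hsp : p.Splits := IsAlgClosed.splits p
  have hcard : p.roots.card = p.natDegree := by
    rw [hsp.natDegree_eq_card_roots]
  have heq := hsp.eq_prod_roots
  have hev : ∀ s : ℂ, p.eval s = p.leadingCoeff * (p.roots.map fun a => s - a).prod := by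
    intro s
    conv_lhs => rw [heq]
    rw [Polynomial.eval_mul, Polynomial.eval_C, Polynomial.eval_multiset_prod,
      Multiset.map_map]
    simp [Function.comp]
  rw [hev t, hev 0, map_mul, map_mul, map_multiset_prod, map_multiset_prod,
    Multiset.map_map, Multiset.map_map]
  have key : (p.roots.map (Complex.abs ∘ fun a => t - a)).prod ≤
      2 ^ p.natDegree * (p.roots.map (Complex.abs ∘ fun a => 0 - a)).prod := by
    have h1 : (p.roots.map (Complex.abs ∘ fun a => t - a)).prod ≤
        (p.roots.map (fun a => 2 * Complex.abs a)).prod := by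
      refine multiset_prod_le (fun a => AbsoluteValue.nonneg _ _)
        (fun a => by positivity) ?_
      intro a ha
      calc Complex.abs (t - a) ≤ Complex.abs t + Complex.abs a := by
            simpa [sub_eq_add_neg] using Complex.abs.add_le t (-a)
        _ ≤ 1 + Complex.abs a := by linarith
        _ ≤ 2 * Complex.abs a := by have := hp a ha; linarith
    have h2 : (p.roots.map (fun a => 2 * Complex.abs a)).prod =
        2 ^ p.natDegree * (p.roots.map (Complex.abs ∘ fun a => 0 - a)).prod := by
      have : (p.roots.map (fun a => 2 * Complex.abs a)).prod =
          (p.roots.map (fun _ => (2:ℝ))).prod * (p.roots.map Complex.abs).prod := by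
        rw [← Multiset.prod_map_mul]
      rw [this, Multiset.map_const', Multiset.prod_replicate, hcard]
      congr 1
      congr 1
      apply Multiset.map_congr rfl
      intro a _
      simp
    linarith
  calc Complex.abs p.leadingCoeff * (p.roots.map (Complex.abs ∘ fun a => t - a)).prod
      ≤ Complex.abs p.leadingCoeff *
        (2 ^ p.natDegree * (p.roots.map (Complex.abs ∘ fun a => 0 - a)).prod) :=
        mul_le_mul_of_nonneg_left key (AbsoluteValue.nonneg _ _)
    _ = 2 ^ p.natDegree * (Complex.abs p.leadingCoeff *
        (p.roots.map (Complex.abs ∘ fun a => 0 - a)).prod) := by ring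



private lemma eval_aeval_poly {V : Type*} (g : V → Polynomial ℂ) (F : MvPolynomial V ℂ) (t : ℂ) :
    (MvPolynomial.aeval g F).eval t = MvPolynomial.eval (fun v => (g v).eval t) F := by
  let φ : Polynomial ℂ →ₐ[ℂ] ℂ :=
    { toRingHom := Polynomial.evalRingHom t, commutes' := by simp }
  have h1 := MvPolynomial.comp_aeval_apply (f := g) φ F
  have h2 : (MvPolynomial.aeval (fun v => (g v).eval t) F : ℂ) =
      MvPolynomial.eval (fun v => (g v).eval t) F := by
    rw [← MvPolynomial.coe_aeval_eq_eval]; rfl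
  exact h1.trans h2

private lemma eval_aeval_poly2 {V : Type*} (g : V → Polynomial (Polynomial ℂ))
    (F : MvPolynomial V ℂ) (z t : ℂ) :
    (((MvPolynomial.aeval g F).map (Polynomial.evalRingHom z)).eval t) =
      MvPolynomial.eval (fun v => ((g v).map (Polynomial.evalRingHom z)).eval t) F := by
  let φ : Polynomial (Polynomial ℂ) →ₐ[ℂ] ℂ :=
    { toRingHom := (Polynomial.evalRingHom t).comp (Polynomial.mapRingHom (Polynomial.evalRingHom z)),
      commutes' := by simp [Polynomial.algebraMap_apply] }
  have h1 := MvPolynomial.comp_aeval_apply (f := g) φ F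
  have h2 : (MvPolynomial.aeval (fun v => ((g v).map (Polynomial.evalRingHom z)).eval t) F : ℂ) =
      MvPolynomial.eval (fun v => ((g v).map (Polynomial.evalRingHom z)).eval t) F := by
    rw [← MvPolynomial.coe_aeval_eq_eval]; rfl
  exact h1.trans h2

private lemma keyP {V : Type*} (A : Set ℂ) (F : MvPolynomial V ℂ) (w : V) (ξ : ℂ)
    (hξ : ξ ∈ closure A)
    (hF : ∀ x : V → ℂ, (∀ v, x v ∈ A) → MvPolynomial.eval x F ≠ 0)
    (x₀ x₁ : V → ℂ) (h0w : x₀ w = ξ) (h1w : x₁ w = ξ)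
    (hseg : ∀ v, v ≠ w → ∀ t : ℂ, Complex.abs t ≤ 1 → x₀ v + t * (x₁ v - x₀ v) ∈ A)
    (h0 : MvPolynomial.eval x₀ F = 0) : MvPolynomial.eval x₁ F = 0 := by
  classical
  set g : V → Polynomial (Polynomial ℂ) := fun v =>
    if v = w then Polynomial.C Polynomial.X
    else Polynomial.C (Polynomial.C (x₀ v)) + Polynomial.C (Polynomial.C (x₁ v - x₀ v)) * Polynomial.X
    with hg
  set S : Polynomial (Polynomial ℂ) := MvPolynomial.aeval g F with hS
  set q : ℂ → Polynomial ℂ := fun z => S.map (Polynomial.evalRingHom z) with hq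
  have hqe : ∀ z t : ℂ, (q z).eval t =
      MvPolynomial.eval (fun v => if v = w then z else x₀ v + t * (x₁ v - x₀ v)) F := by
    intro z t
    rw [hq, hS, eval_aeval_poly2]
    have harg : (fun v => Polynomial.eval t (Polynomial.map (Polynomial.evalRingHom z) (g v))) =
        fun v => if v = w then z else x₀ v + t * (x₁ v - x₀ v) := by
      funext v
      by_cases hv : v = w <;> simp [hg, hv, mul_comm]
    rw [harg]
  -- nonvanishing on the closed unit disc for z ∈ A
  have hnz : ∀ z ∈ A, ∀ t : ℂ, Complex.abs t ≤ 1 → (q z).eval t ≠ 0 := by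
    intro z hz t ht
    rw [hqe]
    apply hF
    intro v
    by_cases hv : v = w
    · simpa [hv] using hz
    · simpa [hv] using hseg v hv t ht
  have hroots : ∀ z ∈ A, ∀ r ∈ (q z).roots, 1 ≤ Complex.abs r := by
    intro z hz r hr
    by_contra hlt
    exact hnz z hz r (le_of_lt (lt_of_not_ge hlt)) ((Polynomial.mem_roots'.mp hr).2)
  have hb : ∀ z ∈ A, Complex.abs ((q z).eval 1) ≤ 2 ^ S.natDegree * Complex.abs ((q z).eval 0) := by
    intro z hz
    calc Complex.abs ((q z).eval 1) ≤ 2 ^ (q z).natDegree * Complex.abs ((q z).eval 0) :=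
          disc_bound _ (hroots z hz) 1 (by simp)
      _ ≤ 2 ^ S.natDegree * Complex.abs ((q z).eval 0) := by
          have hd : (q z).natDegree ≤ S.natDegree := Polynomial.natDegree_map_le
          have : (2:ℝ) ^ (q z).natDegree ≤ 2 ^ S.natDegree :=
            pow_le_pow_right₀ one_le_two hd
          exact mul_le_mul_of_nonneg_right this (AbsoluteValue.nonneg _ _)
  -- continuity in z: one-variable polynomials in z
  set r : ℂ → Polynomial ℂ := fun t => MvPolynomial.aeval
    (fun v => if v = w then Polynomial.X else Polynomial.C (x₀ v + t * (x₁ v - x₀ v))) F with hr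
  have hre : ∀ t z : ℂ, (r t).eval z = (q z).eval t := by
    intro t z
    rw [hqe, hr, eval_aeval_poly]
    have harg : (fun v => Polynomial.eval z
        (if v = w then Polynomial.X else Polynomial.C (x₀ v + t * (x₁ v - x₀ v)))) =
        fun v => if v = w then z else x₀ v + t * (x₁ v - x₀ v) := by
      funext v
      by_cases hv : v = w <;> simp [hv]
    rw [harg]
  have hcl : ∀ z ∈ closure A,
      Complex.abs ((r 1).eval z) ≤ 2 ^ S.natDegree * Complex.abs ((r 0).eval z) := by
    have hsub : closure A ⊆ {z : ℂ | Complex.abs ((r 1).eval z) ≤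
        2 ^ S.natDegree * Complex.abs ((r 0).eval z)} := by
      apply closure_minimal
      · intro z hz
        simp only [Set.mem_setOf_eq, hre]
        exact hb z hz
      · exact isClosed_le (Complex.continuous_abs.comp (r 1).continuous)
          (continuous_const.mul (Complex.continuous_abs.comp (r 0).continuous))
    exact fun z hz => hsub hz
  have h1 := hcl ξ hξ
  rw [hre, hre, hqe, hqe] at h1
  have e0 : (fun v => if v = w then ξ else x₀ v + (0:ℂ) * (x₁ v - x₀ v)) = x₀ := by
    funext v; by_cases hv : v = w <;> simp [hv, h0w.symm]
  have e1 : (fun v => if v = w then ξ else x₀ v + (1:ℂ) * (x₁ v - x₀ v)) = x₁ := by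
    funext v; by_cases hv : v = w
    · simp [hv, h1w.symm]
    · simp [hv]
  rw [e0, e1, h0] at h1
  simp only [map_zero, mul_zero] at h1
  exact Complex.abs.eq_zero.mp (le_antisymm h1 (AbsoluteValue.nonneg _ _))

/-- Lemma 2.2: specializing one variable of an `A`-nonvanishing polynomial to a
value in the closure of `A` yields an `A`-nonvanishing polynomial in the
remaining variables. -/
theorem specialize_nonvanishing
    {V : Type*} [Fintype V] (A : Set ℂ)
    (hA : A.Nonempty) (hAconn : IsConnected A) (hAopen : IsOpen A)
    (F : MvPolynomial V ℂ) (w : V) (ξ : ℂ) (hξ : ξ ∈ closure A)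
    (hF : (∀ x : V → ℂ, MvPolynomial.eval x F = 0) ∨
      (∀ x : V → ℂ, (∀ v, x v ∈ A) → MvPolynomial.eval x F ≠ 0)) :
    (∀ x : V → ℂ, x w = ξ → MvPolynomial.eval x F = 0) ∨
      (∀ x : V → ℂ, x w = ξ → (∀ v, v ≠ w → x v ∈ A) →
        MvPolynomial.eval x F ≠ 0) := by
  classical
  rcases hF with hF | hF
  · exact Or.inl fun x _ => hF x
  by_cases h : ∀ x : V → ℂ, x w = ξ → (∀ v, v ≠ w → x v ∈ A) → MvPolynomial.eval x F ≠ 0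
  · exact Or.inr h
  push_neg at h
  obtain ⟨x₀, hx₀w, hx₀A, hx₀0⟩ := h
  left
  intro x hxw
  -- choose radii
  have hball : ∀ v, ∃ ε : ℝ, 0 < ε ∧ (v ≠ w → Metric.ball (x₀ v) ε ⊆ A) := by
    intro v
    by_cases hv : v = w
    · exact ⟨1, one_pos, fun h' => absurd hv h'⟩
    · obtain ⟨ε, hε, hsub⟩ := Metric.isOpen_iff.mp hAopen _ (hx₀A v hv)
      exact ⟨ε, hε, fun _ => hsub⟩
  choose ε hεpos hεball using hball
  set U : Set ℂ := {t : ℂ | ∀ v, v ≠ w → Complex.abs t * Complex.abs (x v - x₀ v) < ε v} with hU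
  have hUopen : IsOpen U := by
    have hUeq : U = ⋂ v, {t : ℂ | v ≠ w → Complex.abs t * Complex.abs (x v - x₀ v) < ε v} := by
      ext t; simp [hU, Set.mem_iInter]
    rw [hUeq]
    refine isOpen_iInter_of_finite fun v => ?_
    by_cases hv : v = w
    · simp only [hv]
      convert isOpen_univ using 1
      ext t; simp
    · have : {t : ℂ | v ≠ w → Complex.abs t * Complex.abs (x v - x₀ v) < ε v} =
          {t : ℂ | Complex.abs t * Complex.abs (x v - x₀ v) < ε v} := by
        ext t; simp [hv]
      rw [this]
      exact isOpen_lt (Complex.continuous_abs.mul continuous_const) continuous_const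
  have hU0 : (0:ℂ) ∈ U := by
    intro v hv
    simpa using hεpos v
  -- the one-variable polynomial along the segment to x
  set p : Polynomial ℂ := MvPolynomial.aeval
    (fun v => if v = w then Polynomial.C ξ
      else Polynomial.C (x₀ v) + Polynomial.C (x v - x₀ v) * Polynomial.X) F with hp
  have hpe : ∀ t : ℂ, p.eval t =
      MvPolynomial.eval (fun v => if v = w then ξ else x₀ v + t * (x v - x₀ v)) F := by
    intro t
    rw [hp, eval_aeval_poly]
    have harg : (fun v => Polynomial.eval t (if v = w then Polynomial.C ξ
        else Polynomial.C (x₀ v) + Polynomial.C (x v - x₀ v) * Polynomial.X)) =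
        fun v => if v = w then ξ else x₀ v + t * (x v - x₀ v) := by
      funext v
      by_cases hv : v = w <;> simp [hv, mul_comm]
    rw [harg]
  have hproot : ∀ t ∈ U, p.IsRoot t := by
    intro t ht
    have : p.eval t = 0 := by
      rw [hpe]
      refine keyP A F w ξ hξ hF x₀ _ hx₀w (by simp) ?_ hx₀0
      intro v hv s hs
      simp only [if_neg hv]
      have hmem : x₀ v + s * (x₀ v + t * (x v - x₀ v) - x₀ v) ∈ Metric.ball (x₀ v) (ε v) := by
        rw [Metric.mem_ball, dist_eq_norm]
        have : x₀ v + s * (x₀ v + t * (x v - x₀ v) - x₀ v) - x₀ v = s * (t * (x v - x₀ v)) := by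
          ring
        rw [this]
        calc ‖s * (t * (x v - x₀ v))‖ = Complex.abs s * (Complex.abs t * Complex.abs (x v - x₀ v)) := by
              simp [Complex.norm_eq_abs, map_mul]
          _ ≤ 1 * (Complex.abs t * Complex.abs (x v - x₀ v)) := by
              apply mul_le_mul_of_nonneg_right hs
              positivity
          _ = Complex.abs t * Complex.abs (x v - x₀ v) := one_mul _
          _ < ε v := ht v hv
      exact hεball v hv hmem
    exact this
  have hp0 : p = 0 := by
    apply Polynomial.eq_zero_of_infinite_isRoot
    apply Set.Infinite.mono (fun t ht => hproot t ht)
    -- U is infinite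
    obtain ⟨δ, hδpos, hδ⟩ := Metric.isOpen_iff.mp hUopen 0 hU0
    have hinf : (Set.Ioo (0:ℝ) δ).Infinite := Set.Ioo_infinite hδpos
    have himg : ((fun s : ℝ => (s : ℂ)) '' Set.Ioo 0 δ).Infinite :=
      hinf.image (fun a _ b _ hab => by exact_mod_cast hab)
    refine himg.mono ?_
    rintro _ ⟨s, hs, rfl⟩
    apply hδ
    rw [Metric.mem_ball, dist_zero_right]
    simpa [Complex.norm_eq_abs, abs_of_pos hs.1] using hs.2
  have hx : (fun v => if v = w then ξ else x₀ v + (1:ℂ) * (x v - x₀ v)) = x := by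
    funext v
    by_cases hv : v = w
    · simp [hv, hxw.symm]
    · simp [hv]
  have := hpe 1
  rw [hp0, hx] at this
  simpa using this.symm
end

section
/- Let P(z) = Σ_j c_j z^j and K(z) = Σ_{j=0}^d C(d,j) u_j z^j be complex polynomials with deg P ≤ d, and let Q(z) = Σ_{j=0}^d u_j c_j z^j. Fix 0 ≤ α < π/2. If every zero of P lies outside the open sector {z ≠ 0 : |arg z| < π/2} and every zero of K lies outside the open sector {z ≠ 0 : |arg z| < π − α}, then either Q ≡ 0 or every zero of Q lies outside the open sector {z ≠ 0 : |arg z| < π/2 − α}. -/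
open Polynomial Real

/-- Scaled apolarity pairing. -/
noncomputable def Ap (n : ℕ) (f g : Polynomial ℂ) : ℂ :=
  ∑ k ∈ Finset.range (n + 1),
    (-1 : ℂ) ^ k * (k.factorial : ℂ) * ((n - k).factorial : ℂ) * f.coeff k * g.coeff (n - k)

lemma Ap_swap (n : ℕ) (f g : Polynomial ℂ) : Ap n f g = (-1 : ℂ) ^ n * Ap n g f := by
  unfold Ap
  rw [Finset.mul_sum]
  refine Finset.sum_nbij' (fun k => n - k) (fun k => n - k) ?_ ?_ ?_ ?_ ?_
  · intro a ha; simp only [Finset.mem_range] at *; omega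
  · intro a ha; simp only [Finset.mem_range] at *; omega
  · intro a ha; simp only [Finset.mem_range] at ha; show n - (n - a) = a; omega
  · intro a ha; simp only [Finset.mem_range] at ha; show n - (n - a) = a; omega
  · intro a ha
    simp only [Finset.mem_range] at ha
    show _ = (-1:ℂ)^n * ((-1:ℂ) ^ (n-a) * ((n-a).factorial : ℂ) * ((n - (n-a)).factorial : ℂ)
        * g.coeff (n-a) * f.coeff (n - (n-a)))
    have h1 : n - (n - a) = a := by omega
    rw [h1]
    have h2 : (-1 : ℂ) ^ n * (-1 : ℂ) ^ (n - a) = (-1 : ℂ) ^ a := by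
      rw [← pow_add]
      have h3 : n + (n - a) = a + 2 * (n - a) := by omega
      rw [h3, pow_add, pow_mul]
      norm_num
    calc (-1:ℂ) ^ a * (a.factorial : ℂ) * ((n - a).factorial : ℂ) * f.coeff a * g.coeff (n - a)
        = ((-1:ℂ)^n * (-1:ℂ)^(n-a)) * (a.factorial : ℂ) * ((n - a).factorial : ℂ)
          * f.coeff a * g.coeff (n - a) := by rw [h2]
      _ = _ := by ring

lemma Ap_deriv (m : ℕ) (f g : Polynomial ℂ) (hf : f.coeff (m + 1) = 0) :
    Ap m f (derivative g) = Ap (m + 1) f g := by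
  unfold Ap
  rw [Finset.sum_range_succ (n := m + 1)]
  have hlast : (-1 : ℂ) ^ (m + 1) * ((m + 1).factorial : ℂ) * ((m + 1 - (m + 1)).factorial : ℂ) *
      f.coeff (m + 1) * g.coeff (m + 1 - (m + 1)) = 0 := by
    rw [hf]; ring
  rw [hlast, add_zero]
  apply Finset.sum_congr rfl
  intro k hk
  simp only [Finset.mem_range] at hk
  rw [coeff_derivative]
  have h1 : m + 1 - k = (m - k) + 1 := by omega
  rw [h1]
  have h2 : (((m - k) + 1).factorial : ℂ) = ((m - k).factorial : ℂ) * (((m - k) : ℕ) + 1 : ℂ) := by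
    rw [Nat.factorial_succ]; push_cast; ring
  rw [h2]
  ring

lemma coeff_polar (g : Polynomial ℂ) (r : ℂ) (ℓ : ℕ) (j : ℕ) :
    (ℓ • g + (C r - X) * derivative g).coeff j
      = (ℓ : ℂ) * g.coeff j + r * ((j : ℂ) + 1) * g.coeff (j + 1) - (j : ℂ) * g.coeff j := by
  rw [coeff_add, sub_mul, coeff_sub, coeff_smul, coeff_C_mul, coeff_derivative]
  cases j with
  | zero => simp
  | succ i =>
    rw [coeff_X_mul, coeff_derivative]
    push_cast
    simp only [nsmul_eq_mul]
    push_cast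
    ring

lemma coeff_A0 (f : Polynomial ℂ) (ℓ : ℕ) (j : ℕ) :
    ((ℓ • f) - X * derivative f).coeff j = ((ℓ : ℂ) - (j : ℂ)) * f.coeff j := by
  rw [coeff_sub, coeff_smul]
  cases j with
  | zero =>
    have : (X * derivative f).coeff 0 = 0 := by
      rw [mul_comm, coeff_mul_X_zero]
    rw [this]
    simp [nsmul_eq_mul]
  | succ i =>
    rw [coeff_X_mul, coeff_derivative]
    simp only [nsmul_eq_mul]
    push_cast
    ring

lemma coeff_XsubC_mul (h : Polynomial ℂ) (r : ℂ) (k : ℕ) :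
    ((X - C r) * h).coeff k = (if k = 0 then 0 else h.coeff (k - 1)) - r * h.coeff k := by
  rw [sub_mul, coeff_sub, coeff_C_mul]
  cases k with
  | zero => simp [mul_comm X h, coeff_mul_X_zero]
  | succ i => simp [coeff_X_mul]

lemma Ap_peel (m : ℕ) (h g : Polynomial ℂ) (r : ℂ) (hh : h.coeff (m + 1) = 0) :
    Ap m h ((m + 1) • g + (C r - X) * derivative g) = - Ap (m + 1) ((X - C r) * h) g := by
  have coeffG : ∀ j : ℕ, ((m + 1) • g + (C r - X) * derivative g).coeff j
      = ((m : ℂ) + 1) * g.coeff j + r * ((j : ℂ) + 1) * g.coeff (j + 1) - (j : ℂ) * g.coeff j := by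
    intro j
    rw [coeff_add, sub_mul, coeff_sub, coeff_smul, coeff_C_mul, coeff_derivative]
    cases j with
    | zero =>
      have : (X * derivative g).coeff 0 = 0 := by rw [mul_comm, coeff_mul_X_zero]
      rw [this]
      simp [nsmul_eq_mul]
    | succ i =>
      rw [coeff_X_mul, coeff_derivative]
      simp only [nsmul_eq_mul]
      push_cast
      ring
  unfold Ap
  -- RHS: split the (X - C r) * h coefficients
  have hsplit : ∀ k ∈ Finset.range (m + 2),
      (-1 : ℂ) ^ k * (k.factorial : ℂ) * ((m + 1 - k).factorial : ℂ) *
        ((X - C r) * h).coeff k * g.coeff (m + 1 - k)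
      = (-1 : ℂ) ^ k * (k.factorial : ℂ) * ((m + 1 - k).factorial : ℂ) *
        (if k = 0 then 0 else h.coeff (k - 1)) * g.coeff (m + 1 - k)
        - r * ((-1 : ℂ) ^ k * (k.factorial : ℂ) * ((m + 1 - k).factorial : ℂ) *
          h.coeff k * g.coeff (m + 1 - k)) := by
    intro k _
    rw [coeff_XsubC_mul]
    ring
  rw [Finset.sum_congr rfl hsplit, Finset.sum_sub_distrib]
  -- first sum : reindex
  have e1 : ∑ k ∈ Finset.range (m + 2),
      (-1 : ℂ) ^ k * (k.factorial : ℂ) * ((m + 1 - k).factorial : ℂ) *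
        (if k = 0 then 0 else h.coeff (k - 1)) * g.coeff (m + 1 - k)
      = ∑ j ∈ Finset.range (m + 1),
        (-1 : ℂ) ^ (j+1) * ((j+1).factorial : ℂ) * ((m - j).factorial : ℂ) *
          h.coeff j * g.coeff (m - j) := by
    rw [Finset.sum_range_succ' (n := m + 1)]
    simp only [if_pos rfl, reduceIte, mul_zero, zero_mul, add_zero]
    apply Finset.sum_congr rfl
    intro j _
    have h1 : j + 1 ≠ 0 := by omega
    rw [if_neg h1]
    have h2 : j + 1 - 1 = j := by omega
    have h3 : m + 1 - (j + 1) = m - j := by omega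
    rw [h2, h3]
  rw [e1]
  -- second sum: kill the top term
  have e2 : ∑ k ∈ Finset.range (m + 2),
      r * ((-1 : ℂ) ^ k * (k.factorial : ℂ) * ((m + 1 - k).factorial : ℂ) *
        h.coeff k * g.coeff (m + 1 - k))
      = ∑ k ∈ Finset.range (m + 1),
        r * ((-1 : ℂ) ^ k * (k.factorial : ℂ) * ((m + 1 - k).factorial : ℂ) *
          h.coeff k * g.coeff (m + 1 - k)) := by
    rw [Finset.sum_range_succ, hh]
    simp
  rw [e2]
  rw [neg_sub, ← Finset.sum_sub_distrib]
  apply Finset.sum_congr rfl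
  intro k hk
  simp only [Finset.mem_range] at hk
  rw [coeffG]
  have h4 : m - k + 1 = m + 1 - k := by omega
  have h5 : ((m : ℂ) + 1) - ((m : ℂ) - (k : ℂ)) = (k : ℂ) + 1 := by ring
  have hfac1 : (((k+1).factorial : ℕ) : ℂ) = ((k.factorial : ℕ) : ℂ) * ((k : ℂ) + 1) := by
    rw [Nat.factorial_succ]; push_cast; ring
  have hfac2 : (((m + 1 - k).factorial : ℕ) : ℂ)
      = ((m - k).factorial : ℂ) * (((m - k : ℕ) : ℂ) + 1) := by
    rw [← h4, Nat.factorial_succ]; push_cast; ring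
  have hkm : k ≤ m := by omega
  have hmk : ((m - k : ℕ) : ℂ) = (m : ℂ) - (k : ℂ) := by
    push_cast [hkm]; ring
  rw [show m - k + 1 = m + 1 - k from by omega] at *
  rw [hfac1, hfac2, hmk, pow_succ]
  ring


lemma eval_msprod (s : Multiset ℂ) (z : ℂ) :
    ((s.map fun β => X - C β).prod).eval z = (s.map fun β => z - β).prod := by
  rw [eval_multiset_prod, Multiset.map_map]
  congr 1
  apply Multiset.map_congr rfl
  intro β _
  simp

lemma deriv_msprod (s : Multiset ℂ) (z : ℂ) (hz : ∀ β ∈ s, z ≠ β) :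
    (derivative ((s.map fun β => X - C β).prod)).eval z
      = ((s.map fun β => z - β).prod) * (s.map fun β => (z - β)⁻¹).sum := by
  induction s using Multiset.induction_on with
  | empty => simp
  | cons a t ih =>
    have hza : z ≠ a := hz a (Multiset.mem_cons_self a t)
    have hzt : ∀ β ∈ t, z ≠ β := fun β hβ => hz β (Multiset.mem_cons_of_mem hβ)
    simp only [Multiset.map_cons, Multiset.prod_cons, Multiset.sum_cons]
    rw [derivative_mul, eval_add, eval_mul, eval_mul, ih hzt]
    simp only [derivative_sub, derivative_X, derivative_C, sub_zero, eval_one, one_mul,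
      eval_sub, eval_X, eval_C]
    have hza' : z - a ≠ 0 := sub_ne_zero.mpr hza
    rw [eval_msprod]
    linear_combination (-((t.map fun β => z - β).prod)) * mul_inv_cancel₀ hza'

-- factorization data for a nonzero complex polynomial
lemma factor_data (g : Polynomial ℂ) (hg : g ≠ 0) (z : ℂ) (hz : ∀ β ∈ g.roots, z ≠ β) :
    g.eval z ≠ 0 ∧
    (derivative g).eval z = g.eval z * (g.roots.map fun β => (z - β)⁻¹).sum := by
  have hsplits : Splits g := IsAlgClosed.splits g
  have hfac := hsplits.eq_prod_roots
  have hlc : g.leadingCoeff ≠ 0 := leadingCoeff_ne_zero.mpr hg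
  constructor
  · intro h0
    rw [hfac] at h0
    rw [eval_mul, eval_C, eval_msprod] at h0
    rcases mul_eq_zero.mp h0 with h | h
    · exact hlc h
    · have h0mem : (0:ℂ) ∈ Multiset.map (fun β => z - β) g.roots :=
        Multiset.prod_eq_zero_iff.mp h
      obtain ⟨β, hβ, hβ0⟩ := Multiset.mem_map.mp h0mem
      exact hz β hβ (sub_eq_zero.mp hβ0)
  · have hev : g.eval z = g.leadingCoeff * (g.roots.map fun β => z - β).prod := by
      conv_lhs => rw [hfac]
      rw [eval_mul, eval_C, eval_msprod]
    have hder : (derivative g).eval z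
        = g.leadingCoeff * (((g.roots.map fun β => z - β).prod) *
          (g.roots.map fun β => (z - β)⁻¹).sum) := by
      conv_lhs => rw [hfac]
      rw [derivative_C_mul, eval_mul, eval_C, deriv_msprod _ _ hz]
    rw [hder, hev]
    ring

-- membership of roots gives the root predicate
lemma roots_re_pos (g : Polynomial ℂ) (hroots : ∀ w, g.IsRoot w → 0 < w.re) :
    ∀ β ∈ g.roots, 0 < β.re := fun β hβ => hroots β (isRoot_of_mem_roots hβ)

-- disk characterization
lemma disk_iff (σ : ℂ) (t : ℝ) (ht : t < 0) :
    (σ ≠ 0 ∧ (σ⁻¹).re < t) ↔ ‖σ - ((2*t)⁻¹ : ℝ)‖ < -(2*t)⁻¹ := by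
  have h2t : (2*t) < 0 := by linarith
  have ha : ((2*t)⁻¹ : ℝ) < 0 := inv_neg''.mpr h2t
  have hNS : ∀ w : ℂ, Complex.normSq w = w.re^2 + w.im^2 := by
    intro w; rw [Complex.normSq_apply]; ring
  constructor
  · rintro ⟨hσ, hlt⟩
    have hns : Complex.normSq σ > 0 := Complex.normSq_pos.mpr hσ
    rw [Complex.inv_re] at hlt
    have h1 : σ.re < t * Complex.normSq σ := by
      rw [div_lt_iff₀ hns] at hlt; linarith
    -- show abs < -(2t)⁻¹ via squares
    have hsq : Complex.normSq (σ - ((2*t)⁻¹ : ℝ)) < ((2*t)⁻¹)^2 := by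
      rw [hNS]
      simp only [Complex.sub_re, Complex.sub_im, Complex.ofReal_re, Complex.ofReal_im, sub_zero]
      have hexp : (σ.re - (2*t)⁻¹)^2 + σ.im^2 = Complex.normSq σ - 2*(2*t)⁻¹*σ.re + ((2*t)⁻¹)^2 := by
        rw [hNS]; ring
      rw [hexp]
      have : Complex.normSq σ < 2*(2*t)⁻¹*σ.re := by
        have h2 : 2*(2*t)⁻¹*σ.re = σ.re / t := by field_simp
        rw [h2]
        rw [lt_div_iff_of_neg ht]
        linarith
      linarith
    have := Real.sqrt_lt_sqrt (Complex.normSq_nonneg _) hsq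
    rw [Real.sqrt_sq_eq_abs, abs_of_neg ha] at this
    rwa [Complex.norm_def]
  · intro habs
    have hsq : Complex.normSq (σ - ((2*t)⁻¹ : ℝ)) < ((2*t)⁻¹)^2 := by
      have h0 : ‖σ - ((2*t)⁻¹ : ℝ)‖ ^ 2 < (-(2*t)⁻¹)^2 := by
        apply pow_lt_pow_left₀ habs (norm_nonneg _)
        norm_num
      rw [Complex.sq_norm] at h0
      rwa [neg_pow, (by norm_num : (-1:ℝ)^2 = 1), one_mul] at h0
    rw [hNS] at hsq
    simp only [Complex.sub_re, Complex.sub_im, Complex.ofReal_re, Complex.ofReal_im, sub_zero] at hsq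
    have hkey : Complex.normSq σ < σ.re / t := by
      have h5 : σ.re^2 + σ.im^2 < 2*(2*t)⁻¹*σ.re := by nlinarith [hsq]
      have h2 : 2*(2*t)⁻¹*σ.re = σ.re / t := by field_simp
      rw [hNS, ← h2]
      exact h5
    have hσ : σ ≠ 0 := by
      intro h0
      rw [h0] at hkey
      simp at hkey
    refine ⟨hσ, ?_⟩
    have hns : Complex.normSq σ > 0 := Complex.normSq_pos.mpr hσ
    rw [Complex.inv_re, div_lt_iff₀ hns]
    have h3 : t * (σ.re / t) = σ.re := by
      rw [mul_div_assoc']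
      exact mul_div_cancel_left₀ σ.re ht.ne
    have h4 := mul_lt_mul_of_neg_left hkey ht
    rw [h3] at h4
    exact h4


lemma multiset_re_sum (t : Multiset ℂ) : t.sum.re = (t.map Complex.re).sum := by
  induction t using Multiset.induction_on with
  | empty => simp
  | cons x s ih => simp [Complex.add_re, ih]

lemma disk_sum (t : Multiset ℂ) (hne : t ≠ 0) (c : ℝ) (hc : c ≤ 0)
    (h : ∀ σ ∈ t, σ ≠ 0 ∧ (σ⁻¹).re < c) :
    t.sum ≠ 0 ∧ ((t.sum)⁻¹).re < c / t.card := by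
  have hcard : 0 < t.card := Multiset.card_pos.mpr hne
  have hm : (0:ℝ) < t.card := by exact_mod_cast hcard
  rcases lt_or_eq_of_le hc with hneg | hzero
  · -- c < 0
    set a : ℝ := (2*c)⁻¹ with ha
    have key : ‖t.sum - t.card • (a:ℂ)‖ < t.card * (-a) := by
      have h1 : t.sum - t.card • (a:ℂ) = (t.map (fun σ => σ - (a:ℂ))).sum := by
        rw [Multiset.sum_map_sub]
        simp [Multiset.map_const']
      rw [h1]
      calc ‖(t.map (fun σ => σ - (a:ℂ))).sum‖
          = ‖(t.map (fun σ => σ - (a:ℂ))).sum‖ := rfl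
        _ ≤ ((t.map (fun σ => σ - (a:ℂ))).map (fun x : ℂ => ‖x‖)).sum :=
            norm_multiset_sum_le _
        _ = (t.map (fun σ => ‖σ - (a:ℂ)‖)).sum := by
            rw [Multiset.map_map]
            rfl
        _ < (t.map (fun _ => -a)).sum := by
            apply Multiset.sum_lt_sum_of_nonempty hne
            intro σ hσ
            exact (disk_iff σ c hneg).mp (h σ hσ)
        _ = t.card * (-a) := by
            rw [Multiset.map_const', Multiset.sum_replicate, nsmul_eq_mul]
    have hcm : c / t.card < 0 := div_neg_of_neg_of_pos hneg hm
    have ham : ((2 * (c / t.card))⁻¹ : ℝ) = t.card * a := by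
      rw [ha]
      field_simp
    have key2 : ‖t.sum - ((2 * (c / t.card))⁻¹ : ℝ)‖ < -(2 * (c / t.card))⁻¹ := by
      rw [ham]
      have hcast : (((t.card : ℝ) * a : ℝ) : ℂ) = t.card • (a:ℂ) := by
        push_cast
        rw [nsmul_eq_mul]
      rw [hcast]
      calc ‖t.sum - t.card • (a:ℂ)‖ < t.card * (-a) := key
        _ = -(t.card * a) := by ring
    exact (disk_iff t.sum (c / t.card) hcm).mpr key2
  · -- c = 0
    subst hzero
    have hre : t.sum.re < 0 := by
      rw [multiset_re_sum]
      have h2 : (t.map Complex.re).sum < (t.map (fun _ => (0:ℝ))).sum := by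
        apply Multiset.sum_lt_sum_of_nonempty hne
        intro σ hσ
        obtain ⟨hσ0, hlt⟩ := h σ hσ
        have hns : 0 < Complex.normSq σ := Complex.normSq_pos.mpr hσ0
        rw [Complex.inv_re] at hlt
        exact (div_neg_iff.mp hlt).resolve_left (fun ⟨_, hb⟩ => absurd hns (not_lt.mpr hb.le)) |>.1
      simpa using h2
    have hsum0 : t.sum ≠ 0 := fun h0 => by simp [h0] at hre
    refine ⟨hsum0, ?_⟩
    rw [zero_div, Complex.inv_re]
    exact div_neg_of_neg_of_pos hre (Complex.normSq_pos.mpr hsum0)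

lemma lemC (g : Polynomial ℂ) (hg : g ≠ 0) (hdg : 1 ≤ g.natDegree)
    (hroots : ∀ w, g.IsRoot w → 0 < w.re) (z : ℂ) (hz : z.re ≤ 0) :
    (derivative g).eval z ≠ 0 := by
  have hzr : ∀ β ∈ g.roots, z ≠ β := by
    intro β hβ
    have := hroots β (isRoot_of_mem_roots hβ)
    intro h; rw [h] at hz; linarith
  obtain ⟨hev, hder⟩ := factor_data g hg z hzr
  rw [hder]
  have hcard : g.roots.card = g.natDegree := by
    rw [(IsAlgClosed.splits g).natDegree_eq_card_roots]
  have hne : g.roots ≠ 0 := by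
    intro h0
    rw [h0] at hcard
    simp at hcard
    omega
  have hsum : ((g.roots.map fun β => (z - β)⁻¹).sum).re < 0 := by
    rw [multiset_re_sum, Multiset.map_map]
    have h2 : (g.roots.map (Complex.re ∘ fun β => (z - β)⁻¹)).sum
        < (g.roots.map (fun _ => (0:ℝ))).sum := by
      apply Multiset.sum_lt_sum_of_nonempty hne
      intro β hβ
      have hβre := hroots β (isRoot_of_mem_roots hβ)
      have hsub : (z - β).re < 0 := by
        simp only [Complex.sub_re]; linarith
      have hsub0 : z - β ≠ 0 := fun h => by rw [h] at hsub; simp at hsub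
      show ((z - β)⁻¹).re < 0
      rw [Complex.inv_re]
      exact div_neg_of_neg_of_pos hsub (Complex.normSq_pos.mpr hsub0)
    calc (g.roots.map (Complex.re ∘ fun β => (z - β)⁻¹)).sum
        < (g.roots.map (fun _ => (0:ℝ))).sum := h2
      _ = 0 := by simp [Multiset.map_const', Multiset.sum_replicate]
  intro h0
  rcases mul_eq_zero.mp h0 with h | h
  · exact hev h
  · rw [h] at hsum; simp at hsum

lemma lemA (ℓ : ℕ) (hℓ : 1 ≤ ℓ) (g : Polynomial ℂ) (hg : g ≠ 0) (hdeg : g.natDegree ≤ ℓ)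
    (hroots : ∀ w, g.IsRoot w → 0 < w.re) (r z : ℂ) (hr : r.re ≤ 0) (hz : z.re ≤ 0) :
    (ℓ • g + (C r - X) * derivative g).eval z ≠ 0 := by
  have hzr : ∀ β ∈ g.roots, z ≠ β := by
    intro β hβ
    have := hroots β (isRoot_of_mem_roots hβ)
    intro h; rw [h] at hz; linarith
  obtain ⟨hev, hder⟩ := factor_data g hg z hzr
  have heval : (ℓ • g + (C r - X) * derivative g).eval z
      = g.eval z * ((ℓ : ℂ) + (r - z) * (g.roots.map fun β => (z - β)⁻¹).sum) := by
    rw [eval_add, eval_mul, eval_smul, eval_sub, eval_C, eval_X, hder]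
    simp only [nsmul_eq_mul]
    ring
  rw [heval]
  intro h0
  rcases mul_eq_zero.mp h0 with h | h
  · exact hev h
  have hℓC : ((ℓ:ℕ) : ℂ) ≠ 0 := Nat.cast_ne_zero.mpr (by omega)
  by_cases hempty : g.roots = 0
  · rw [hempty] at h
    simp at h
    exact hℓC (by exact_mod_cast h)
  set t : Multiset ℂ := g.roots.map fun β => (z - β)⁻¹ with hts
  have htne : t ≠ 0 := by
    simp [hts, hempty]
  have hsub : ∀ σ ∈ t, σ ≠ 0 ∧ (σ⁻¹).re < z.re := by
    intro σ hσ
    obtain ⟨β, hβ, rfl⟩ := Multiset.mem_map.mp hσ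
    have hβre := hroots β (isRoot_of_mem_roots hβ)
    have hsubre : (z - β).re < z.re := by
      simp only [Complex.sub_re]; linarith
    have hsub0 : z - β ≠ 0 := by
      intro h'
      have := hroots β (isRoot_of_mem_roots hβ)
      apply hzr β hβ
      rw [sub_eq_zero] at h'
      exact h'
    refine ⟨inv_ne_zero hsub0, ?_⟩
    rw [inv_inv]
    exact hsubre
  obtain ⟨hS0, hSre⟩ := disk_sum t htne z.re hz hsub
  have hrz : r - z ≠ 0 := by
    intro h'
    rw [h', zero_mul, add_zero] at h
    exact hℓC h
  have hmul2 : t.sum * (z - r) = (ℓ:ℂ) := by linear_combination -h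
  have hSinv : (t.sum)⁻¹ = (z - r) / (ℓ:ℂ) := by
    have h5 : t.sum⁻¹ * (t.sum * (z - r)) = t.sum⁻¹ * (ℓ:ℂ) := by rw [hmul2]
    rw [← mul_assoc, inv_mul_cancel₀ hS0, one_mul] at h5
    rw [h5, mul_div_assoc, div_self hℓC, mul_one]
  have hre2 : ((z - r) / (ℓ:ℂ)).re = (z.re - r.re) / (ℓ:ℝ) := by
    have hc : ((ℓ:ℕ):ℂ) = (((ℓ:ℝ)):ℂ) := by push_cast; rfl
    rw [hc, Complex.div_ofReal_re, Complex.sub_re]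
  rw [hSinv, hre2] at hSre
  -- now contradiction
  have hm1 : 1 ≤ t.card := by
    rw [Nat.one_le_iff_ne_zero]
    simpa using htne
  have hmℓ : t.card ≤ ℓ := by
    have h1 : t.card = g.roots.card := by rw [hts, Multiset.card_map]
    have h2 : g.roots.card = g.natDegree := by
      rw [(IsAlgClosed.splits g).natDegree_eq_card_roots]
    omega
  have hmpos : (0:ℝ) < t.card := by exact_mod_cast hm1
  have hℓpos : (0:ℝ) < (ℓ:ℝ) := by exact_mod_cast hℓ
  have hmlR : (t.card : ℝ) ≤ (ℓ:ℝ) := by exact_mod_cast hmℓ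
  have h2 : z.re / t.card ≤ z.re / (ℓ:ℝ) := by
    rw [div_le_div_iff₀ hmpos hℓpos]
    exact mul_le_mul_of_nonpos_left hmlR hz
  have h3 : z.re / (ℓ:ℝ) ≤ (z.re - r.re) / (ℓ:ℝ) :=
    (div_le_div_iff_of_pos_right hℓpos).mpr (by linarith)
  linarith

lemma lemB (ℓ : ℕ) (f : Polynomial ℂ) (hf : f ≠ 0) (hdeg : f.natDegree ≤ ℓ)
    (hroots : ∀ w, f.IsRoot w → w.re ≤ 0) (k : ℕ) (hk : k < ℓ) (hck : f.coeff k ≠ 0)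
    (z : ℂ) (hz : 0 < z.re) : ((ℓ • f) - X * derivative f).eval z ≠ 0 := by
  have hzr : ∀ β ∈ f.roots, z ≠ β := by
    intro β hβ
    have := hroots β (isRoot_of_mem_roots hβ)
    intro h; rw [h] at hz; linarith
  obtain ⟨hev, hder⟩ := factor_data f hf z hzr
  have heval : ((ℓ • f) - X * derivative f).eval z
      = f.eval z * ((ℓ : ℂ) - z * (f.roots.map fun β => (z - β)⁻¹).sum) := by
    rw [eval_sub, eval_mul, eval_smul, eval_X, hder]
    simp only [nsmul_eq_mul]
    ring
  rw [heval]
  intro h0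
  rcases mul_eq_zero.mp h0 with h | h
  · exact hev h
  -- T := ℓ - z S = 0 ; rewrite as (ℓ - m) + Σ (-β)/(z-β)
  have hcard : f.roots.card = f.natDegree := by
    rw [(IsAlgClosed.splits f).natDegree_eq_card_roots]
  set m := f.roots.card with hm
  -- key rewriting: ℓ - z * Σ 1/(z-β) = (ℓ - m) + Σ (-β)/(z-β)
  have hsplit : (ℓ : ℂ) - z * (f.roots.map fun β => (z - β)⁻¹).sum
      = ((ℓ : ℂ) - (m : ℂ)) + (f.roots.map fun β => -β / (z - β)).sum := by
    have h1 : ∀ β ∈ f.roots, -β / (z - β) = 1 - z * (z - β)⁻¹ := by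
      intro β hβ
      have hsub0 : z - β ≠ 0 := sub_ne_zero.mpr (hzr β hβ)
      rw [div_eq_iff hsub0, sub_mul, one_mul, mul_assoc, inv_mul_cancel₀ hsub0, mul_one]
      ring
    rw [Multiset.map_congr rfl h1, Multiset.sum_map_sub, Multiset.sum_map_mul_left]
    simp only [Multiset.map_const', Multiset.sum_replicate, nsmul_eq_mul, mul_one]
    rw [hm]
    ring
  rw [hsplit] at h
  -- take real part of h * z
  have hRe : ∀ β ∈ f.roots, 0 ≤ (-β / (z - β) * z).re ∧
      ((-β / (z - β) * z).re = 0 → β = 0) := by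
    intro β hβ
    have hβre := hroots β (isRoot_of_mem_roots hβ)
    have hsub0 : z - β ≠ 0 := sub_ne_zero.mpr (hzr β hβ)
    have hns : 0 < Complex.normSq (z - β) := Complex.normSq_pos.mpr hsub0
    have hval : (-β / (z - β) * z).re
        = (z.re * Complex.normSq β - β.re * Complex.normSq z) / Complex.normSq (z - β) := by
      rw [div_mul_eq_mul_div, Complex.div_re]
      have h1 : (-β * z).re * (z - β).re + (-β * z).im * (z - β).im
          = z.re * Complex.normSq β - β.re * Complex.normSq z := by
        simp only [Complex.mul_re, Complex.mul_im, Complex.neg_re, Complex.neg_im,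
          Complex.sub_re, Complex.sub_im, Complex.normSq_apply]
        ring
      rw [← add_div, h1]
    constructor
    · rw [hval]
      apply div_nonneg ?_ hns.le
      have h2 : 0 ≤ z.re * Complex.normSq β := mul_nonneg hz.le (Complex.normSq_nonneg _)
      nlinarith [Complex.normSq_nonneg z, hβre]
    · intro h0
      rw [hval, _root_.div_eq_zero_iff] at h0
      rcases h0 with h0 | h0
      · by_contra hβ0
        have hns2 : 0 < Complex.normSq β := Complex.normSq_pos.mpr hβ0
        nlinarith [mul_pos hz hns2, Complex.normSq_nonneg z, hβre]
      · linarith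
  -- real part of sum
  have hTz : (((ℓ : ℂ) - (m : ℂ) + (f.roots.map fun β => -β / (z - β)).sum) * z).re = 0 := by
    rw [h, zero_mul, Complex.zero_re]
  have hexp : (((ℓ : ℂ) - (m : ℂ) + (f.roots.map fun β => -β / (z - β)).sum) * z).re
      = ((ℓ:ℝ) - (m:ℝ)) * z.re + (f.roots.map fun β => (-β / (z - β) * z).re).sum := by
    rw [add_mul, Complex.add_re]
    congr 1
    · have : ((ℓ : ℂ) - (m : ℂ)) * z = (((ℓ:ℝ) - (m:ℝ)) : ℝ) * z := by push_cast; ring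
      rw [this, Complex.re_ofReal_mul]
    · rw [← Multiset.sum_map_mul_right, multiset_re_sum, Multiset.map_map]
      rfl
  rw [hexp] at hTz
  -- m ≤ ℓ
  have hmℓ : m ≤ ℓ := by omega
  have hsumnn : 0 ≤ (f.roots.map fun β => (-β / (z - β) * z).re).sum := by
    apply Multiset.sum_nonneg
    intro x hx
    obtain ⟨β, hβ, rfl⟩ := Multiset.mem_map.mp hx
    exact (hRe β hβ).1
  have hfirstnn : 0 ≤ ((ℓ:ℝ) - (m:ℝ)) * z.re := by
    apply mul_nonneg ?_ hz.le
    have : (m:ℝ) ≤ (ℓ:ℝ) := by exact_mod_cast hmℓ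
    linarith
  have hfirst0 : ((ℓ:ℝ) - (m:ℝ)) * z.re = 0 := by linarith
  have hsum0 : (f.roots.map fun β => (-β / (z - β) * z).re).sum = 0 := by linarith
  -- hence m = ℓ
  have hmeq : m = ℓ := by
    rcases mul_eq_zero.mp hfirst0 with h1 | h1
    · have : (m:ℝ) = (ℓ:ℝ) := by linarith
      exact_mod_cast this
    · linarith
  -- all roots are zero
  have hallzero : ∀ β ∈ f.roots, β = 0 := by
    intro β hβ
    apply (hRe β hβ).2
    by_contra hne0
    have hpos : 0 < (-β / (z - β) * z).re := lt_of_le_of_ne (hRe β hβ).1 (Ne.symm hne0)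
    obtain ⟨s, hs⟩ := Multiset.exists_cons_of_mem hβ
    rw [hs] at hsum0
    simp only [Multiset.map_cons, Multiset.sum_cons] at hsum0
    have hrest : 0 ≤ (s.map fun β => (-β / (z - β) * z).re).sum := by
      apply Multiset.sum_nonneg
      intro x hx
      obtain ⟨γ, hγ, rfl⟩ := Multiset.mem_map.mp hx
      have hγf : γ ∈ f.roots := by rw [hs]; exact Multiset.mem_cons_of_mem hγ
      exact (hRe γ hγf).1
    linarith
  -- then f = C lc * X ^ ℓ and coeff k = 0, contradiction
  have hrep : f.roots = Multiset.replicate ℓ (0:ℂ) := by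
    rw [Multiset.eq_replicate]
    constructor
    · omega
    · exact hallzero
  have hfac := (IsAlgClosed.splits f).eq_prod_roots
  rw [hrep] at hfac
  have hXpow : (Multiset.map (fun a => X - C a) (Multiset.replicate ℓ (0:ℂ))).prod
      = X ^ ℓ := by
    rw [Multiset.map_replicate, Multiset.prod_replicate]
    simp
  rw [hXpow] at hfac
  apply hck
  rw [hfac, coeff_C_mul, coeff_X_pow, if_neg (by omega : ¬ k = ℓ), mul_zero]

lemma grace1 (n : ℕ) : ∀ f g : Polynomial ℂ, f ≠ 0 → g ≠ 0 →
    f.natDegree ≤ n → g.natDegree ≤ n → n ≤ f.natDegree + g.natDegree →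
    (∀ z, f.IsRoot z → z.re ≤ 0) → (∀ z, g.IsRoot z → 0 < z.re) →
    Ap n f g = 0 → False := by
  induction n with
  | zero =>
    intro f g hf hg hdf hdg _ _ _ hap
    have hf0 : f.coeff 0 ≠ 0 := by
      intro h0
      apply hf
      rw [eq_C_of_natDegree_le_zero hdf, h0, map_zero]
    have hg0 : g.coeff 0 ≠ 0 := by
      intro h0
      apply hg
      rw [eq_C_of_natDegree_le_zero hdg, h0, map_zero]
    have hap' : f.coeff 0 * g.coeff 0 = 0 := by
      unfold Ap at hap
      simpa using hap
    exact (mul_ne_zero hf0 hg0) hap'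
  | succ m ih =>
    intro f g hf hg hdf hdg hsum hfr hgr hap
    by_cases hfn : f.coeff (m + 1) = 0
    · -- derivative step on g
      have hdf' : f.natDegree ≤ m := by
        rcases Nat.lt_or_ge f.natDegree (m+1) with h | h
        · omega
        · exfalso
          have heq : f.natDegree = m + 1 := le_antisymm hdf h
          have hlc : f.leadingCoeff = 0 := by rw [leadingCoeff, heq]; exact hfn
          exact hf (leadingCoeff_eq_zero.mp hlc)
      have hdg1 : 1 ≤ g.natDegree := by omega
      have hg' : derivative g ≠ 0 := by
        intro h0
        have := natDegree_eq_zero_of_derivative_eq_zero h0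
        omega
      have hdegder : (derivative g).natDegree = g.natDegree - 1 := by
        have := degree_derivative_eq g (by omega : 0 < g.natDegree)
        exact natDegree_eq_of_degree_eq_some this
      apply ih f (derivative g) hf hg' hdf' (by omega) (by omega) hfr
      · intro z hz
        by_contra hzre
        exact lemC g hg hdg1 hgr z (by linarith [not_lt.mp hzre]) hz
      · rw [Ap_deriv m f g hfn]
        exact hap
    · -- peel a root of f
      have hdfeq : f.natDegree = m + 1 := le_antisymm hdf (le_natDegree_of_ne_zero hfn)
      have hdegpos : 0 < f.degree := by
        rw [← natDegree_pos_iff_degree_pos]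
        omega
      obtain ⟨r, hr⟩ := Complex.exists_root hdegpos
      have hrre : r.re ≤ 0 := hfr r hr
      have hfact : (X - C r) * (f / (X - C r)) = f := mul_div_eq_iff_isRoot.mpr hr
      set h := f / (X - C r) with hh
      have hh0 : h ≠ 0 := by
        intro h0
        rw [h0, mul_zero] at hfact
        exact hf hfact.symm
      have hXrC : (X - C r) ≠ 0 := X_sub_C_ne_zero r
      have hdegh : h.natDegree = m := by
        have := natDegree_mul hXrC hh0
        rw [hfact, natDegree_X_sub_C] at this
        omega
      have hhroots : ∀ z, h.IsRoot z → z.re ≤ 0 := by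
        intro z hz
        apply hfr
        show eval z f = 0
        rw [← hfact, eval_mul, show eval z h = 0 from hz, mul_zero]
      have hhtop : h.coeff (m + 1) = 0 :=
        coeff_eq_zero_of_natDegree_lt (by omega)
      set G : Polynomial ℂ := (m + 1) • g + (C r - X) * derivative g with hG
      have hGne : ∀ z : ℂ, z.re ≤ 0 → G.eval z ≠ 0 := by
        intro z hz
        exact lemA (m + 1) (by omega) g hg hdg hgr r z hrre hz
      have hG0 : G ≠ 0 := by
        intro h0
        apply hGne 0 (by simp) 
        rw [h0, eval_zero]
      have hGroots : ∀ z, G.IsRoot z → 0 < z.re := by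
        intro z hz
        by_contra hzre
        exact hGne z (not_lt.mp hzre) hz
      have hdegG : G.natDegree ≤ m := by
        rw [natDegree_le_iff_coeff_eq_zero]
        intro N hN
        rw [hG, coeff_polar]
        have hbN1 : g.coeff (N + 1) = 0 := coeff_eq_zero_of_natDegree_lt (by omega)
        by_cases hN1 : N = m + 1
        · subst hN1
          rw [hbN1]
          push_cast
          ring
        · have hbN : g.coeff N = 0 := coeff_eq_zero_of_natDegree_lt (by omega)
          rw [hbN, hbN1]
          ring
      have hap2 : Ap m h G = 0 := by
        rw [hG, Ap_peel m h g r hhtop, hfact, hap, neg_zero]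
      exact ih h G hh0 hG0 (le_of_eq hdegh) hdegG (by omega) hhroots hGroots hap2

lemma grace0 (n : ℕ) : ∀ f g : Polynomial ℂ, f ≠ 0 → g ≠ 0 →
    f.natDegree ≤ n → g.natDegree ≤ n →
    (∀ z, f.IsRoot z → z.re ≤ 0) → (∀ z, g.IsRoot z → 0 < z.re ∨ z = 0) →
    (∃ k j : ℕ, f.coeff k ≠ 0 ∧ g.coeff j ≠ 0 ∧ n ≤ k + g.natDegree ∧ k + j ≤ n) →
    Ap n f g = 0 → False := by
  induction n with
  | zero =>
    intro f g hf hg hdf hdg hfr hgr hkj hap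
    have hg0 : g.coeff 0 ≠ 0 := by
      intro h0
      apply hg
      rw [eq_C_of_natDegree_le_zero hdg, h0, map_zero]
    have hgr' : ∀ z, g.IsRoot z → 0 < z.re := by
      intro z hz
      rcases hgr z hz with h | h
      · exact h
      · exfalso
        apply hg0
        subst h
        rw [coeff_zero_eq_eval_zero]
        exact hz
    exact grace1 0 f g hf hg hdf hdg (by omega) hfr hgr' hap
  | succ m ih =>
    intro f g hf hg hdf hdg hfr hgr hkj hap
    obtain ⟨k, j, hk, hj, hkg, hkjn⟩ := hkj
    by_cases hg0 : g.coeff 0 = 0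
    · -- peel the root 0 of g
      have hj1 : 1 ≤ j := by
        rcases Nat.eq_zero_or_pos j with h | h
        · exfalso; apply hj; rw [h]; exact hg0
        · exact h
      have hkm : k ≤ m := by omega
      have hXdvd : X * g.divX = g := by
        have := X_mul_divX_add g
        rw [hg0, map_zero, add_zero] at this
        exact this
      have hgx0 : g.divX ≠ 0 := by
        intro h0
        apply hg
        rw [← hXdvd, h0, mul_zero]
      have hdeggx : g.divX.natDegree = g.natDegree - 1 := by
        have hdg1 : 1 ≤ g.natDegree := by
          by_contra hlt
          apply hg
          have : g.natDegree = 0 := by omega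
          rw [eq_C_of_natDegree_le_zero (le_of_eq this), hg0, map_zero]
        have := natDegree_mul (X_ne_zero (R := ℂ)) hgx0
        rw [hXdvd, natDegree_X] at this
        omega
      set f1 : Polynomial ℂ := (m + 1) • f - X * derivative f with hf1
      have hcoefff1 : ∀ i, f1.coeff i = (((m+1:ℕ):ℂ) - (i:ℂ)) * f.coeff i := by
        intro i
        rw [hf1, coeff_A0]
      have hf10 : f1 ≠ 0 := by
        intro h0
        apply hk
        have := hcoefff1 k
        rw [h0, coeff_zero] at this
        have hne : (((m+1:ℕ):ℂ) - (k:ℂ)) ≠ 0 := by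
          intro hzz
          have : ((m+1 : ℕ) : ℂ) = (k:ℂ) := by linear_combination hzz
          have : (m+1 : ℕ) = k := by exact_mod_cast this
          omega
        rcases mul_eq_zero.mp this.symm with hc | hc
        · exact absurd hc hne
        · exact hc
      have hf1roots : ∀ z, f1.IsRoot z → z.re ≤ 0 := by
        intro z hz
        by_contra hzre
        exact lemB (m+1) f hf hdf hfr k (by omega) hk z (not_le.mp hzre) hz
      have hdegf1 : f1.natDegree ≤ m := by
        rw [natDegree_le_iff_coeff_eq_zero]
        intro N hN
        rw [hcoefff1]
        by_cases hN1 : N = m + 1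
        · subst hN1
          have : (((m+1:ℕ):ℂ) - ((m+1:ℕ):ℂ)) = 0 := by ring
          rw [this, zero_mul]
        · rw [coeff_eq_zero_of_natDegree_lt (by omega), mul_zero]
      have hgxroots : ∀ z, g.divX.IsRoot z → 0 < z.re ∨ z = 0 := by
        intro z hz
        apply hgr
        show eval z g = 0
        rw [← hXdvd, eval_mul, show eval z g.divX = 0 from hz, mul_zero]
      -- apolarity transfer
      have hgxtop : g.divX.coeff (m + 1) = 0 := by
        apply coeff_eq_zero_of_natDegree_lt
        omega
      have hap2 : Ap m f1 g.divX = 0 := by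
        have h1 : Ap m g.divX ((m + 1) • f + (C 0 - X) * derivative f)
            = - Ap (m + 1) ((X - C 0) * g.divX) f := Ap_peel m g.divX f 0 hgxtop
        rw [map_zero, zero_sub, sub_zero, neg_mul] at h1
        have h2 : (m + 1) • f + -(X * derivative f) = f1 := by
          rw [hf1, sub_eq_add_neg]
        rw [h2, hXdvd] at h1
        rw [Ap_swap m f1 g.divX]
        rw [Ap_swap (m+1) g f, hap, mul_zero] at h1
        rw [h1]
        simp
      apply ih f1 g.divX hf10 hgx0 hdegf1 (by omega) hf1roots hgxroots ?_ hap2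
      refine ⟨k, j - 1, ?_, ?_, ?_, ?_⟩
      · rw [hcoefff1]
        apply mul_ne_zero ?_ hk
        intro hzz
        have : ((m+1 : ℕ) : ℂ) = (k:ℂ) := by linear_combination hzz
        have : (m+1 : ℕ) = k := by exact_mod_cast this
        omega
      · rw [coeff_divX]
        rwa [show j - 1 + 1 = j from by omega]
      · omega
      · omega
    · -- no root at 0 : strict roots, use grace1
      have hgr' : ∀ z, g.IsRoot z → 0 < z.re := by
        intro z hz
        rcases hgr z hz with h | h
        · exact h
        · exfalso
          apply hg0
          subst h
          rw [coeff_zero_eq_eval_zero]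
          exact hz
      have hkdf : k ≤ f.natDegree := le_natDegree_of_ne_zero hk
      exact grace1 (m+1) f g hf hg hdf hdg (by omega) hfr hgr' hap

lemma coeff_of_std_sum (d : ℕ) (a : ℕ → ℂ) (i : ℕ) :
    (∑ j ∈ Finset.range (d + 1), C (a j) * X ^ j).coeff i = if i ≤ d then a i else 0 := by
  rw [finset_sum_coeff]
  simp only [coeff_C_mul, coeff_X_pow]
  by_cases h : i ≤ d
  · rw [if_pos h, Finset.sum_eq_single_of_mem i (Finset.mem_range.mpr (by omega))]
    · simp
    · intro b _ hbi
      rw [if_neg (fun hh => hbi hh.symm), mul_zero]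
  · rw [if_neg h]
    apply Finset.sum_eq_zero
    intro j hj
    simp only [Finset.mem_range] at hj
    rw [if_neg (by omega), mul_zero]

lemma eval_of_std_sum (d : ℕ) (a : ℕ → ℂ) (z : ℂ) :
    (∑ j ∈ Finset.range (d + 1), C (a j) * X ^ j).eval z
      = ∑ j ∈ Finset.range (d + 1), a j * z ^ j := by
  rw [eval_finset_sum]
  apply Finset.sum_congr rfl
  intro j _
  rw [eval_mul, eval_C, eval_pow, eval_X]

lemma coeff_of_rev_sum (d : ℕ) (b : ℕ → ℂ) (i : ℕ) :
    (∑ k ∈ Finset.range (d + 1), C (b k) * X ^ (d - k)).coeff i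
      = if i ≤ d then b (d - i) else 0 := by
  rw [finset_sum_coeff]
  simp only [coeff_C_mul, coeff_X_pow]
  by_cases h : i ≤ d
  · rw [if_pos h, Finset.sum_eq_single_of_mem (d - i) (Finset.mem_range.mpr (by omega))]
    · rw [if_pos (by omega), mul_one]
    · intro b' hb' hbi
      simp only [Finset.mem_range] at hb'
      rw [if_neg (by omega), mul_zero]
  · rw [if_neg h]
    apply Finset.sum_eq_zero
    intro j hj
    simp only [Finset.mem_range] at hj
    rw [if_neg (by omega), mul_zero]


/-- Schur–Szegő composition, sector version (Proposition 2.5(a)). -/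
theorem schur_szego_sector
    (d : ℕ) (c u : ℕ → ℂ) (α : ℝ) (hα0 : 0 ≤ α) (hα : α < π / 2)
    (P : Polynomial ℂ) (hP : P = ∑ j ∈ Finset.range (d + 1), Polynomial.C (c j) * Polynomial.X ^ j)
    (K : Polynomial ℂ) (hK : K = ∑ j ∈ Finset.range (d + 1),
      Polynomial.C ((d.choose j : ℂ) * u j) * Polynomial.X ^ j)
    (Q : Polynomial ℂ) (hQ : Q = ∑ j ∈ Finset.range (d + 1),
      Polynomial.C (u j * c j) * Polynomial.X ^ j)
    (hPnv : ∀ z : ℂ, z ≠ 0 → |z.arg| < π / 2 → P.eval z ≠ 0)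
    (hKnv : ∀ z : ℂ, z ≠ 0 → |z.arg| < π - α → K.eval z ≠ 0) :
    Q = 0 ∨ ∀ z : ℂ, z ≠ 0 → |z.arg| < π / 2 - α → Q.eval z ≠ 0 := by
  by_cases hQ0 : Q = 0
  · exact Or.inl hQ0
  right
  intro z hz0 hargz hevalQ
  -- find a nonzero composite coefficient
  have hex : ∃ j₀, j₀ ≤ d ∧ u j₀ * c j₀ ≠ 0 := by
    by_contra hall
    push_neg at hall
    apply hQ0
    rw [hQ]
    apply Finset.sum_eq_zero
    intro j hj
    simp only [Finset.mem_range] at hj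
    rw [hall j (by omega), map_zero, zero_mul]
  obtain ⟨j₀, hj₀d, hj₀⟩ := hex
  have huj₀ : u j₀ ≠ 0 := fun h => hj₀ (by rw [h, zero_mul])
  have hcj₀ : c j₀ ≠ 0 := fun h => hj₀ (by rw [h, mul_zero])
  -- the reversed polynomial g₀
  set g₀ : Polynomial ℂ :=
    ∑ k ∈ Finset.range (d + 1), C ((d.choose k : ℂ) * u k * (-z) ^ k) * X ^ (d - k) with hg₀
  have hg₀coeff : ∀ i, g₀.coeff i
      = if i ≤ d then (d.choose (d - i) : ℂ) * u (d - i) * (-z) ^ (d - i) else 0 := by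
    intro i
    rw [hg₀, coeff_of_rev_sum]
  have hPcoeff : ∀ i, P.coeff i = if i ≤ d then c i else 0 := by
    intro i
    rw [hP, coeff_of_std_sum]
  -- nonvanishing
  have hP0 : P ≠ 0 := by
    intro h0
    apply hcj₀
    have := hPcoeff j₀
    rw [h0, coeff_zero, if_pos hj₀d] at this
    exact this.symm
  have hcg : g₀.coeff (d - j₀) ≠ 0 := by
    rw [hg₀coeff, if_pos (by omega), show d - (d - j₀) = j₀ from by omega]
    apply mul_ne_zero (mul_ne_zero ?_ huj₀) (pow_ne_zero _ (neg_ne_zero.mpr hz0))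
    exact_mod_cast (Nat.choose_pos hj₀d).ne'
  have hg₀0 : g₀ ≠ 0 := by
    intro h0
    apply hcg
    rw [h0, coeff_zero]
  -- degree bounds
  have hdegP : P.natDegree ≤ d := by
    rw [natDegree_le_iff_coeff_eq_zero]
    intro N hN
    rw [hPcoeff, if_neg (by omega)]
  have hdegg₀ : g₀.natDegree ≤ d := by
    rw [natDegree_le_iff_coeff_eq_zero]
    intro N hN
    rw [hg₀coeff, if_neg (by omega)]
  -- roots of P are in the closed left half-plane
  have hProots : ∀ ρ : ℂ, P.IsRoot ρ → ρ.re ≤ 0 := by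
    intro ρ hρ
    by_contra hre
    have hre' : 0 < ρ.re := not_le.mp hre
    have hρ0 : ρ ≠ 0 := fun h => by rw [h] at hre'; simp at hre'
    exact hPnv ρ hρ0 (Complex.abs_arg_lt_pi_div_two_iff.mpr (Or.inl hre')) hρ
  -- roots of g₀ are in the open right half-plane or zero
  have hg₀roots : ∀ w : ℂ, g₀.IsRoot w → 0 < w.re ∨ w = 0 := by
    intro w hw
    by_cases hw0 : w = 0
    · exact Or.inr hw0
    left
    by_contra hre
    have hwre : w.re ≤ 0 := not_lt.mp hre
    set η : ℂ := -w⁻¹ with hη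
    have hη0 : η ≠ 0 := by
      rw [hη]
      simp [inv_ne_zero hw0]
    have hηre : 0 ≤ η.re := by
      rw [hη, Complex.neg_re, Complex.inv_re]
      apply neg_nonneg.mpr
      exact div_nonpos_of_nonpos_of_nonneg hwre (Complex.normSq_nonneg w)
    set β : ℂ := z * η with hβ
    have hβ0 : β ≠ 0 := mul_ne_zero hz0 hη0
    have hargη : |η.arg| ≤ π / 2 := Complex.abs_arg_le_pi_div_two_iff.mpr hηre
    have habs : |z.arg + η.arg| < π - α := by
      calc |z.arg + η.arg| ≤ |z.arg| + |η.arg| := abs_add_le _ _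
        _ < (π/2 - α) + π/2 := add_lt_add_of_lt_of_le hargz hargη
        _ = π - α := by ring
    have hmem : z.arg + η.arg ∈ Set.Ioc (-π) π := by
      have h1 : |z.arg + η.arg| < π := by
        calc |z.arg + η.arg| < π - α := habs
          _ ≤ π := by linarith
      obtain ⟨ha, hb⟩ := abs_lt.mp h1
      exact ⟨ha, hb.le⟩
    have hargβ : β.arg = z.arg + η.arg := (Complex.arg_mul_eq_add_arg_iff hz0 hη0).mpr hmem
    have hargβlt : |β.arg| < π - α := by
      rw [hargβ]
      exact habs
    -- K vanishes at β
    have hKβ : K.eval β = 0 := by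
      have hg₀eval : g₀.eval w
          = ∑ k ∈ Finset.range (d+1), (d.choose k : ℂ) * u k * (-z)^k * w^(d-k) := by
        rw [hg₀, eval_finset_sum]
        apply Finset.sum_congr rfl
        intro k _
        rw [eval_mul, eval_C, eval_pow, eval_X]
      have hKeval : K.eval β = ∑ k ∈ Finset.range (d+1), ((d.choose k : ℂ) * u k) * β^k := by
        rw [hK, eval_of_std_sum]
      have hrel : g₀.eval w = w^d * K.eval β := by
        rw [hg₀eval, hKeval, Finset.mul_sum]
        apply Finset.sum_congr rfl
        intro k hk
        simp only [Finset.mem_range] at hk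
        have hkd : k ≤ d := by omega
        have hβk : β ^ k = (-z)^k * ((w^k)⁻¹) := by
          have h2 : β = (-z) * w⁻¹ := by rw [hβ, hη]; ring
          rw [h2, mul_pow, inv_pow]
        rw [hβk]
        have hwd : w^d = w^k * w^(d-k) := by rw [← pow_add]; congr 1; omega
        rw [hwd]
        have hwk : (w:ℂ)^k ≠ 0 := pow_ne_zero _ hw0
        field_simp
      have h0 : w^d * K.eval β = 0 := by rw [← hrel]; exact hw
      rcases mul_eq_zero.mp h0 with h | h
      · exact absurd h (pow_ne_zero _ hw0)
      · exact h
    exact hKnv β hβ0 hargβlt hKβ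
  -- apolarity equals d! * Q(z) = 0
  have hQeval : (0:ℂ) = ∑ j ∈ Finset.range (d+1), u j * c j * z^j := by
    rw [← hevalQ, hQ, eval_of_std_sum]
  have hap : Ap d P g₀ = 0 := by
    unfold Ap
    have hterm : ∀ k ∈ Finset.range (d+1),
        (-1:ℂ)^k * (k.factorial : ℂ) * ((d-k).factorial : ℂ) * P.coeff k * g₀.coeff (d-k)
        = (d.factorial : ℂ) * (u k * c k * z^k) := by
      intro k hk
      simp only [Finset.mem_range] at hk
      have hkd : k ≤ d := by omega
      rw [hPcoeff, if_pos hkd, hg₀coeff, if_pos (Nat.sub_le d k),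
        show d - (d-k) = k from by omega]
      have hzk : (-z)^k = (-1:ℂ)^k * z^k := by rw [neg_pow]
      have hsign : (-1:ℂ)^k * (-1:ℂ)^k = 1 := by rw [← mul_pow]; norm_num
      have hfact : ((d.choose k : ℕ) : ℂ) * (k.factorial : ℂ) * ((d-k).factorial : ℂ)
          = (d.factorial : ℂ) := by
        exact_mod_cast congrArg (fun n : ℕ => (n:ℂ))
          (Nat.choose_mul_factorial_mul_factorial hkd)
      calc (-1:ℂ)^k * (k.factorial : ℂ) * ((d-k).factorial : ℂ) * c k
            * ((d.choose k : ℂ) * u k * (-z)^k)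
          = ((-1:ℂ)^k * (-1:ℂ)^k)
            * (((d.choose k : ℕ) : ℂ) * (k.factorial : ℂ) * ((d-k).factorial : ℂ))
            * (u k * c k * z^k) := by rw [hzk]; push_cast; ring
        _ = 1 * (d.factorial : ℂ) * (u k * c k * z^k) := by rw [hsign, hfact]
        _ = (d.factorial : ℂ) * (u k * c k * z^k) := by ring
    rw [Finset.sum_congr rfl hterm, ← Finset.mul_sum, ← hQeval, mul_zero]
  have hg₀deg : d - j₀ ≤ g₀.natDegree := le_natDegree_of_ne_zero hcg
  have hPcj₀ : P.coeff j₀ ≠ 0 := by rw [hPcoeff, if_pos hj₀d]; exact hcj₀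
  exact grace0 d P g₀ hP0 hg₀0 hdegP hdegg₀ hProots hg₀roots
    ⟨j₀, d - j₀, hPcj₀, hcg, by omega, by omega⟩ hap
end

section
/- Let P(z) = Σ_j c_j z^j and K(z) = Σ_{j=0}^d C(d,j) u_j z^j be complex polynomials with deg P ≤ d, and let Q(z) = Σ_{j=0}^d u_j c_j z^j. Fix κ > 0 and ρ > 0. If P has no zeros in the open disk {|z| < ρ} and K has no zeros in the open disk {|z| < κ}, then either Q ≡ 0 or Q has no zeros in the open disk {|z| < κρ}. -/
open Polynomial


-- log derivative identity
lemma ld (w : ℂ) : ∀ (S : Multiset ℂ) (a : ℂ), (∀ α ∈ S, w ≠ α) →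
    Polynomial.eval w (Polynomial.derivative (Polynomial.C a * (S.map (fun α => Polynomial.X - Polynomial.C α)).prod))
      = Polynomial.eval w (Polynomial.C a * (S.map (fun α => Polynomial.X - Polynomial.C α)).prod)
        * (S.map (fun α => (w - α)⁻¹)).sum := by
  intro S
  induction S using Multiset.induction_on with
  | empty => simp
  | cons β S ih =>
    intro a hw
    have hβ : w - β ≠ 0 := sub_ne_zero.mpr (hw β (Multiset.mem_cons_self _ _))
    have ihS := ih a (fun α hα => hw α (Multiset.mem_cons_of_mem hα))
    simp only [Multiset.map_cons, Multiset.prod_cons, Multiset.sum_cons]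
    have hre : Polynomial.C a * ((Polynomial.X - Polynomial.C β) * (S.map (fun α => Polynomial.X - Polynomial.C α)).prod)
        = (Polynomial.X - Polynomial.C β) * (Polynomial.C a * (S.map (fun α => Polynomial.X - Polynomial.C α)).prod) := by
      ring
    rw [hre, Polynomial.derivative_mul]
    simp only [Polynomial.eval_add, Polynomial.eval_mul, Polynomial.eval_sub, Polynomial.eval_X,
      Polynomial.eval_C, Polynomial.derivative_sub, Polynomial.derivative_X, Polynomial.derivative_C,
      sub_zero, Polynomial.eval_one, one_mul]
    rw [ihS]
    field_simp
    simp only [Polynomial.eval_mul, Polynomial.eval_C]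
    ring

lemma ms_cs : ∀ S : Multiset ℝ, (∀ x ∈ S, 0 ≤ x) → S.sum ^ 2 ≤ S.card * (S.map (fun x => x ^ 2)).sum := by
  intro S
  induction S using Multiset.induction_on with
  | empty => simp
  | cons a S ih =>
    intro h
    have ha : 0 ≤ a := h a (Multiset.mem_cons_self _ _)
    have hS : ∀ x ∈ S, 0 ≤ x := fun x hx => h x (Multiset.mem_cons_of_mem hx)
    have h1 := ih hS
    have h2 : (0:ℝ) ≤ S.sum := Multiset.sum_nonneg hS
    have h3 : (0:ℝ) ≤ (S.map (fun x => x ^ 2)).sum := by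
      apply Multiset.sum_nonneg; intro x hx
      obtain ⟨y, _, rfl⟩ := Multiset.mem_map.mp hx
      positivity
    simp only [Multiset.sum_cons, Multiset.card_cons, Multiset.map_cons]
    push_cast
    set n : ℝ := (S.card : ℝ) with hn
    set t : ℝ := S.sum with ht
    set Q : ℝ := (S.map (fun x => x ^ 2)).sum with hQ
    rcases eq_or_lt_of_le (by positivity : (0:ℝ) ≤ n) with h0 | h0
    · have ht0 : t = 0 := by nlinarith
      rw [ht0]; nlinarith
    · have hmul : n * ((a + t)^2) ≤ n * ((n+1)*(a^2+Q)) := by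
        nlinarith [sq_nonneg (n*a - t), mul_le_mul_of_nonneg_left h1 (le_of_lt h0)]
      exact le_of_mul_le_mul_left hmul h0

lemma ms_re (w : ℂ) : ∀ S : Multiset ℂ, (S.map (fun s => (w * s).re)).sum = (w * S.sum).re := by
  intro S
  induction S using Multiset.induction_on with
  | empty => simp
  | cons a S ih =>
    simp only [Multiset.map_cons, Multiset.sum_cons, mul_add, Complex.add_re, ih]

lemma ms_tri : ∀ S : Multiset ℂ, ‖S.sum‖ ≤ (S.map (‖·‖)).sum := by
  intro S
  have := norm_multiset_sum_le S
  simpa using this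

lemma key_ineq (A : ℝ) (hA : 0 < A) (w : ℂ) (S : Multiset ℂ)
    (h : ∀ s ∈ S, A * Complex.normSq s + 2 * (w * s).re ≤ 1)
    (m : ℕ) (hm1 : 1 ≤ m) (hm : Multiset.card S ≤ m) (s0 : ℂ) (hsum : (m : ℂ) * s0 = S.sum)
    (h0 : 1 < A * Complex.normSq s0 + 2 * (w * s0).re) : False := by
  set n := Multiset.card S with hn
  set Q : ℝ := (S.map (fun s => Complex.normSq s)).sum with hQ
  have hQ0 : 0 ≤ Q := by
    apply Multiset.sum_nonneg
    intro x hx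
    obtain ⟨y, _, rfl⟩ := Multiset.mem_map.mp hx
    exact Complex.normSq_nonneg y
  -- sum of hypotheses
  have hsum1 : (S.map (fun s => A * Complex.normSq s + 2 * (w * s).re)).sum ≤ (S.map (fun _ => (1:ℝ))).sum :=
    Multiset.sum_map_le_sum_map _ _ h
  have hconst : (S.map (fun _ => (1:ℝ))).sum = (n : ℝ) := by
    simp [Multiset.map_const', hn]
  have hsplit : (S.map (fun s => A * Complex.normSq s + 2 * (w * s).re)).sum
      = A * Q + 2 * (w * S.sum).re := by
    rw [← ms_re w S]
    rw [show (fun s => A * Complex.normSq s + 2 * (w * s).re)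
        = (fun s => (A * Complex.normSq s) + (2 * (w * s).re)) from rfl]
    rw [Multiset.sum_map_add]
    congr 1
    · exact Multiset.sum_map_mul_left
    · exact Multiset.sum_map_mul_left
  have h1 : A * Q + 2 * (w * S.sum).re ≤ (n : ℝ) := by
    rw [← hsplit]; rw [hconst] at hsum1; exact hsum1
  -- Cauchy-Schwarz : normSq S.sum ≤ n * Q
  have h2 : Complex.normSq S.sum ≤ (n : ℝ) * Q := by
    have t1 := ms_tri S
    have t2 : ((S.map (‖·‖)).sum)^2 ≤ (n:ℝ) * ((S.map (‖·‖)).map (fun x => x^2)).sum := by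
      have := ms_cs (S.map (‖·‖)) (by intro x hx; obtain ⟨y, _, rfl⟩ := Multiset.mem_map.mp hx; exact norm_nonneg y)
      simpa [hn] using this
    have t3 : ((S.map (‖·‖)).map (fun x => x^2)).sum = Q := by
      rw [Multiset.map_map, hQ]
      congr 1
      ext s
      simp [Complex.sq_norm]
    have t4 : Complex.normSq S.sum = ‖S.sum‖ ^ 2 := (Complex.sq_norm _).symm
    have t5 : ‖S.sum‖ ^ 2 ≤ ((S.map (‖·‖)).sum)^2 := by
      apply pow_le_pow_left₀ (norm_nonneg _) t1
    rw [t4, ← t3]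
    exact le_trans t5 t2
  -- facts about s0
  have h3 : Complex.normSq S.sum = (m:ℝ)^2 * Complex.normSq s0 := by
    rw [← hsum, Complex.normSq_mul]
    congr 1
    simp [Complex.normSq_apply]
    push_cast
    ring
  have h4 : (w * S.sum).re = (m:ℝ) * (w * s0).re := by
    rw [← hsum]
    rw [show w * ((m:ℂ) * s0) = (m:ℂ) * (w * s0) by ring]
    simp
  have hmn : (n : ℝ) ≤ (m : ℝ) := Nat.cast_le.mpr hm
  have hm0 : (0:ℝ) ≤ (m:ℝ) := Nat.cast_nonneg m
  -- combine
  have hm2 : (0:ℝ) < (m:ℝ)^2 := by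
    have : (1:ℝ) ≤ (m:ℝ) := by exact_mod_cast hm1
    positivity
  nlinarith [mul_le_mul_of_nonneg_left h1 hm0, mul_nonneg (mul_nonneg hA.le hQ0) (sub_nonneg.mpr hmn), mul_le_mul_of_nonneg_left h2 hA.le, mul_lt_mul_of_pos_left h0 hm2, mul_le_mul_of_nonneg_left hmn hm0]

lemma sqid (ρ : ℝ) (w s : ℂ) : (ρ^2 - Complex.normSq w) * Complex.normSq s + 2*(w*s).re - 1
    = -(Complex.normSq (w*s - 1) - ρ^2 * Complex.normSq s) := by
  simp only [Complex.normSq_apply, Complex.mul_re, Complex.mul_im, Complex.sub_re,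
    Complex.sub_im, Complex.one_re, Complex.one_im]
  ring

lemma laguerre (m : ℕ) (hm : 1 ≤ m) (ρ : ℝ) (hρ : 0 < ρ) (P : Polynomial ℂ)
    (hP0 : P ≠ 0) (hdeg : P.natDegree ≤ m)
    (hnv : ∀ z : ℂ, ‖z‖ < ρ → P.eval z ≠ 0)
    (ζ : ℂ) (hζ : ‖ζ‖ < ρ) (w : ℂ) (hw : ‖w‖ < ρ)
    (heq : (m : ℂ) * P.eval w + (ζ - w) * (Polynomial.derivative P).eval w = 0) : False := by
  have hPw : P.eval w ≠ 0 := hnv w hw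
  have hwζ : w ≠ ζ := by
    rintro rfl
    have h' : (m : ℂ) * P.eval w = 0 := by simpa using heq
    rcases mul_eq_zero.mp h' with h | h
    · exact absurd (by exact_mod_cast h : m = 0) (by omega)
    · exact hPw h
  have hsp : P.Splits := IsAlgClosed.splits P
  set S := P.roots with hS
  set a := P.leadingCoeff with ha
  have hfac : P = Polynomial.C a * (S.map (fun α => Polynomial.X - Polynomial.C α)).prod :=
    hsp.eq_prod_roots
  have hcard : Multiset.card S = P.natDegree := Polynomial.splits_iff_card_roots.mp hsp
  have hroots : ∀ α ∈ S, w ≠ α := by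
    intro α hα hwα
    exact hPw (by rw [hwα]; exact Polynomial.isRoot_of_mem_roots hα)
  have hrootsρ : ∀ α ∈ S, ρ ≤ ‖α‖ := by
    intro α hα
    by_contra hlt
    exact hnv α (lt_of_not_ge hlt) (Polynomial.isRoot_of_mem_roots hα)
  have hld : (Polynomial.derivative P).eval w = P.eval w * (S.map (fun α => (w - α)⁻¹)).sum := by
    conv_lhs => rw [hfac]
    conv_rhs => rw [hfac]
    exact ld w S a hroots
  have hwζ' : w - ζ ≠ 0 := sub_ne_zero.mpr hwζ
  set Ssum := (S.map (fun α => (w - α)⁻¹)).sum with hSsum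
  have hkey : P.eval w * ((m : ℂ) - (w - ζ) * Ssum) = 0 := by
    rw [hld] at heq
    linear_combination heq
  have hkey2 : (m : ℂ) - (w - ζ) * Ssum = 0 := by
    rcases mul_eq_zero.mp hkey with h | h
    · exact absurd h hPw
    · exact h
  have hsum : (m : ℂ) * (w - ζ)⁻¹ = Ssum := by
    have h9 : (m:ℂ) = (w - ζ) * Ssum := by linear_combination hkey2
    rw [h9]
    field_simp
  -- set up key_ineq
  set A : ℝ := ρ^2 - Complex.normSq w with hA'
  have hA : 0 < A := by
    have : Complex.normSq w < ρ^2 := by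
      rw [← Complex.sq_norm]
      exact pow_lt_pow_left₀ hw (norm_nonneg w) (by norm_num)
    simp [hA']
    linarith
  apply key_ineq A hA w (S.map (fun α => (w - α)⁻¹)) ?_ m hm ?_ ((w - ζ)⁻¹) ?_ ?_
  · -- each root condition
    intro s hs
    obtain ⟨α, hα, rfl⟩ := Multiset.mem_map.mp hs
    have hu : w - α ≠ 0 := sub_ne_zero.mpr (hroots α hα)
    have h1 : w * (w - α)⁻¹ - 1 = α * (w - α)⁻¹ := by
      field_simp
      ring
    have h2 : ρ^2 ≤ Complex.normSq α := by
      rw [← Complex.sq_norm]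
      exact pow_le_pow_left₀ hρ.le (hrootsρ α hα) 2
    have h3 : ρ^2 * Complex.normSq (w - α)⁻¹ ≤ Complex.normSq (w * (w - α)⁻¹ - 1) := by
      rw [h1, Complex.normSq_mul]
      exact mul_le_mul_of_nonneg_right h2 (Complex.normSq_nonneg _)
    have := sqid ρ w ((w - α)⁻¹)
    simp only [hA']
    linarith
  · rw [Multiset.card_map, hcard]; exact hdeg
  · exact hsum
  · -- strict condition for s0
    have hs0 : (w - ζ)⁻¹ ≠ 0 := inv_ne_zero hwζ'
    have hns0 : 0 < Complex.normSq (w - ζ)⁻¹ := Complex.normSq_pos.mpr hs0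
    have h1 : w * (w - ζ)⁻¹ - 1 = ζ * (w - ζ)⁻¹ := by
      field_simp
      ring
    have h2 : Complex.normSq ζ < ρ^2 := by
      rw [← Complex.sq_norm]
      exact pow_lt_pow_left₀ hζ (norm_nonneg ζ) (by norm_num)
    have h3 : Complex.normSq (w * (w - ζ)⁻¹ - 1) < ρ^2 * Complex.normSq (w - ζ)⁻¹ := by
      rw [h1, Complex.normSq_mul]
      exact mul_lt_mul_of_pos_right h2 hns0
    have := sqid ρ w ((w - ζ)⁻¹)
    simp only [hA']
    linarith

lemma sum0 (n : ℕ) (f : ℕ → ℂ) : ∑ j ∈ Finset.range (n+1), f j * (0:ℂ)^j = f 0 := by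
  rw [Finset.sum_eq_single 0]
  · simp
  · intro b _ hb
    simp [zero_pow hb]
  · intro h
    exact absurd (Finset.mem_range.mpr (Nat.succ_pos n)) h

lemma dereval (d : ℕ) (c : ℕ → ℂ) (z : ℂ) :
    (Polynomial.derivative (∑ j ∈ Finset.range (d+2), Polynomial.C (c j) * Polynomial.X^j)).eval z
      = ∑ k ∈ Finset.range (d+1), ((k:ℂ)+1) * c (k+1) * z^k := by
  rw [Polynomial.derivative_sum]
  simp only [Polynomial.derivative_C_mul_X_pow]
  rw [Polynomial.eval_finset_sum]
  simp only [Polynomial.eval_mul, Polynomial.eval_C, Polynomial.eval_pow, Polynomial.eval_X]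
  rw [Finset.sum_range_succ' (fun j => (c j * (j:ℂ)) * z^(j-1)) (d+1)]
  have h0 : c 0 * ((0:ℕ):ℂ) * z ^ (0-1) = 0 := by simp
  rw [h0, add_zero]
  refine Finset.sum_congr rfl (fun k _ => ?_)
  push_cast
  ring_nf

lemma Reval (d : ℕ) (c : ℕ → ℂ) (ζ z : ℂ) :
    ((d:ℂ)+1) * (∑ j ∈ Finset.range (d+2), c j * z^j)
      + (ζ - z) * (Polynomial.derivative (∑ j ∈ Finset.range (d+2), Polynomial.C (c j) * Polynomial.X^j)).eval z
    = ∑ k ∈ Finset.range (d+1), (((d:ℂ)+1-(k:ℂ)) * c k + ζ * ((k:ℂ)+1) * c (k+1)) * z^k := by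
  rw [dereval]
  have h1 : z * (∑ k ∈ Finset.range (d+1), ((k:ℂ)+1) * c (k+1) * z^k)
      = ∑ j ∈ Finset.range (d+2), (j:ℂ) * c j * z^j := by
    rw [Finset.sum_range_succ' (fun j => (j:ℂ) * c j * z^j) (d+1), Finset.mul_sum]
    have h0 : ((0:ℕ):ℂ) * c 0 * z^0 = 0 := by simp
    rw [h0, add_zero]
    refine Finset.sum_congr rfl (fun k _ => ?_)
    push_cast
    ring
  have h3 : ((d:ℂ)+1) * (∑ j ∈ Finset.range (d+2), c j * z^j)
        - (∑ j ∈ Finset.range (d+2), (j:ℂ) * c j * z^j)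
      = ∑ j ∈ Finset.range (d+2), (((d:ℂ)+1)-(j:ℂ)) * c j * z^j := by
    rw [Finset.mul_sum, ← Finset.sum_sub_distrib]
    exact Finset.sum_congr rfl (fun j _ => by ring)
  have h2 : (∑ j ∈ Finset.range (d+2), (((d:ℂ)+1) - (j:ℂ)) * c j * z^j)
      = ∑ k ∈ Finset.range (d+1), (((d:ℂ)+1-(k:ℂ))) * c k * z^k := by
    rw [Finset.sum_range_succ]
    have h0 : ((d:ℂ)+1-((d+1:ℕ):ℂ)) * c (d+1) * z^(d+1) = 0 := by push_cast; ring
    rw [h0, add_zero]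
  have expand : ((d:ℂ)+1) * (∑ j ∈ Finset.range (d+2), c j * z^j)
      + (ζ - z) * (∑ k ∈ Finset.range (d+1), ((k:ℂ)+1) * c (k+1) * z^k)
      = (((d:ℂ)+1) * (∑ j ∈ Finset.range (d+2), c j * z^j)
          - z * (∑ k ∈ Finset.range (d+1), ((k:ℂ)+1) * c (k+1) * z^k))
        + ζ * (∑ k ∈ Finset.range (d+1), ((k:ℂ)+1) * c (k+1) * z^k) := by ring
  rw [expand, h1, h3, h2, Finset.mul_sum, ← Finset.sum_add_distrib]
  exact Finset.sum_congr rfl (fun k _ => by ring)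

theorem szego_sum : ∀ (d : ℕ) (c u : ℕ → ℂ) (κ ρ : ℝ), 0 < κ → 0 < ρ →
    (∀ z : ℂ, ‖z‖ < ρ → (∑ j ∈ Finset.range (d+1), c j * z^j) ≠ 0) →
    (∀ z : ℂ, ‖z‖ < κ → (∑ j ∈ Finset.range (d+1), (d.choose j : ℂ) * u j * z^j) ≠ 0) →
    ∀ z0 : ℂ, ‖z0‖ < κ * ρ → (∑ j ∈ Finset.range (d+1), u j * c j * z0^j) ≠ 0 := by
  intro d
  induction d with
  | zero =>
    intro c u κ ρ hκ hρ hP hK z0 _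
    have hc0 : c 0 ≠ 0 := by
      have := hP 0 (by simpa using hρ)
      rwa [sum0 0 c] at this
    have hu0 : u 0 ≠ 0 := by
      have := hK 0 (by simpa using hκ)
      rw [sum0 0 (fun j => ((Nat.choose 0 j : ℕ):ℂ) * u j)] at this
      simpa using this
    rw [Finset.sum_range_one]
    simpa using mul_ne_zero hu0 hc0
  | succ d ih =>
    intro c u κ ρ hκ hρ hP hK z0 hz0
    -- polynomial P
    set Ppoly : Polynomial ℂ := ∑ j ∈ Finset.range (d+2), Polynomial.C (c j) * Polynomial.X^j with hPpoly
    have hPeval : ∀ z : ℂ, Ppoly.eval z = ∑ j ∈ Finset.range (d+2), c j * z^j := by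
      intro z
      rw [hPpoly, Polynomial.eval_finset_sum]
      simp
    have hPnv : ∀ z : ℂ, ‖z‖ < ρ → Ppoly.eval z ≠ 0 := by
      intro z hz; rw [hPeval]; exact hP z hz
    have hc0 : c 0 ≠ 0 := by
      have := hP 0 (by simpa using hρ)
      rwa [sum0 (d+1) c] at this
    have hPne : Ppoly ≠ 0 := by
      intro h
      apply hc0
      have h2 := hPeval 0
      rw [h, sum0 (d+1) c] at h2
      simpa using h2.symm
    have hPdeg : Ppoly.natDegree ≤ d + 1 := by
      apply Polynomial.natDegree_sum_le_of_forall_le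
      intro j hj
      refine le_trans (Polynomial.natDegree_C_mul_X_pow_le _ _) ?_
      exact Nat.lt_succ_iff.mp (Finset.mem_range.mp hj)
    -- the key nonvanishing lemma for the polar derivative, parametrized by ζ
    have hRnv : ∀ ζ : ℂ, ‖ζ‖ < ρ → ∀ w : ℂ, ‖w‖ < ρ →
        (∑ k ∈ Finset.range (d+1), (((d:ℂ)+1-(k:ℂ)) * c k + ζ * ((k:ℂ)+1) * c (k+1)) * w^k) ≠ 0 := by
      intro ζ hζ w hw hzero
      rw [← Reval d c ζ w, ← hPeval w, ← hPpoly] at hzero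
      apply laguerre (d+1) (by omega) ρ hρ Ppoly hPne hPdeg hPnv ζ hζ w hw
      push_cast at hzero ⊢
      linear_combination hzero
    by_cases hu : u (d+1) = 0
    · -- case A1 : formal degree drop, polar derivative at 0
      set c' : ℕ → ℂ := fun k => ((d:ℂ)+1-(k:ℂ)) * c k with hc'
      set u' : ℕ → ℂ := fun k => (((d+1).choose k : ℕ):ℂ) * u k / ((d.choose k : ℕ):ℂ) with hu'
      have hP' : ∀ z : ℂ, ‖z‖ < ρ → (∑ k ∈ Finset.range (d+1), c' k * z^k) ≠ 0 := by
        intro z hz h0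
        refine hRnv 0 (by simpa using hρ) z hz ?_
        refine Eq.trans ?_ h0
        refine Finset.sum_congr rfl (fun k _ => ?_)
        rw [hc']
        ring
      have hK' : ∀ z : ℂ, ‖z‖ < κ → (∑ k ∈ Finset.range (d+1), (d.choose k : ℂ) * u' k * z^k) ≠ 0 := by
        intro z hz h0
        refine hK z hz ?_
        rw [Finset.sum_range_succ]
        have htop : (((d+1).choose (d+1) : ℕ):ℂ) * u (d+1) * z^(d+1) = 0 := by rw [hu]; ring
        rw [htop, add_zero]
        refine Eq.trans ?_ h0
        refine Finset.sum_congr rfl (fun k hk => ?_)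
        have hkd : k ≤ d := Nat.lt_succ_iff.mp (Finset.mem_range.mp hk)
        have hch : ((d.choose k : ℕ):ℂ) ≠ 0 := by exact_mod_cast (Nat.choose_pos hkd).ne'
        rw [hu']
        field_simp
      -- apply induction hypothesis
      have hres := ih c' u' κ ρ hκ hρ hP' hK' z0 hz0
      intro h0
      apply hres
      have hterm : ∀ k ∈ Finset.range (d+1), u' k * c' k * z0^k = ((d:ℂ)+1) * (u k * c k * z0^k) := by
        intro k hk
        have hkd : k ≤ d := Nat.lt_succ_iff.mp (Finset.mem_range.mp hk)
        have hch : ((d.choose k : ℕ):ℂ) ≠ 0 := by exact_mod_cast (Nat.choose_pos hkd).ne'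
        have hbin2 : ((d.choose k : ℕ):ℂ) * ((d:ℂ)+1) = (((d+1).choose k : ℕ):ℂ) * ((d:ℂ)+1-(k:ℂ)) := by
          have hn := Nat.choose_mul_succ_eq d k
          have hcast : ((d.choose k * (d+1) : ℕ):ℂ) = (((d+1).choose k * (d+1-k) : ℕ):ℂ) := by
            exact_mod_cast congrArg (fun n : ℕ => (n:ℂ)) hn
          push_cast [Nat.cast_sub (le_trans hkd (Nat.le_succ d))] at hcast
          push_cast
          linear_combination hcast
        rw [hu', hc']
        field_simp
        linear_combination (-(u k * c k * z0 ^ k)) * hbin2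
      have htop : ((d:ℂ)+1) * (u (d+1) * c (d+1) * z0^(d+1)) = 0 := by rw [hu]; ring
      calc ∑ k ∈ Finset.range (d+1), u' k * c' k * z0^k
          = ∑ k ∈ Finset.range (d+1), ((d:ℂ)+1) * (u k * c k * z0^k) := Finset.sum_congr rfl hterm
        _ = ∑ j ∈ Finset.range (d+2), ((d:ℂ)+1) * (u j * c j * z0^j) := by
            rw [Finset.sum_range_succ ((fun j => ((d:ℂ)+1) * (u j * c j * z0^j))) (d+1), htop, add_zero]
        _ = ((d:ℂ)+1) * ∑ j ∈ Finset.range (d+2), u j * c j * z0^j := (Finset.mul_sum _ _ _).symm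
        _ = 0 := by rw [h0, mul_zero]
    · -- case A2 : u (d+1) ≠ 0, K has a root β with |β| ≥ κ
      set Kpoly : Polynomial ℂ := ∑ j ∈ Finset.range (d+2),
          Polynomial.C ((((d+1).choose j : ℕ):ℂ) * u j) * Polynomial.X^j with hKpoly
      have hKeval : ∀ z : ℂ, Kpoly.eval z
          = ∑ j ∈ Finset.range (d+2), (((d+1).choose j : ℕ):ℂ) * u j * z^j := by
        intro z
        rw [hKpoly, Polynomial.eval_finset_sum]
        simp
      have hKnv : ∀ z : ℂ, ‖z‖ < κ → Kpoly.eval z ≠ 0 := by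
        intro z hz; rw [hKeval]; exact hK z hz
      have hKcoeff : ∀ j, j < d+2 → Kpoly.coeff j = (((d+1).choose j : ℕ):ℂ) * u j := by
        intro j hj
        rw [hKpoly, Polynomial.finset_sum_coeff]
        rw [Finset.sum_eq_single j]
        · rw [Polynomial.coeff_C_mul_X_pow]
          simp
        · intro b _ hbj
          rw [Polynomial.coeff_C_mul_X_pow, if_neg (Ne.symm hbj)]
        · intro hnj
          exact absurd (Finset.mem_range.mpr hj) hnj
      have hKdeg : Kpoly.natDegree ≤ d + 1 := by
        apply Polynomial.natDegree_sum_le_of_forall_le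
        intro j hj
        refine le_trans (Polynomial.natDegree_C_mul_X_pow_le _ _) ?_
        exact Nat.lt_succ_iff.mp (Finset.mem_range.mp hj)
      have hKtopc : Kpoly.coeff (d+1) = u (d+1) := by
        rw [hKcoeff (d+1) (by omega), Nat.choose_self]
        simp
      have hKne : Kpoly ≠ 0 := fun h => hu (by rw [← hKtopc, h, Polynomial.coeff_zero])
      have hKdeg' : Kpoly.natDegree = d + 1 := by
        refine le_antisymm hKdeg (Polynomial.le_natDegree_of_ne_zero ?_)
        rw [hKtopc]; exact hu
      have hKdegpos : 0 < Kpoly.degree := by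
        rw [Polynomial.degree_eq_natDegree hKne, hKdeg']
        exact_mod_cast Nat.succ_pos d
      obtain ⟨β, hβroot⟩ := Complex.exists_root hKdegpos
      have hβκ : κ ≤ ‖β‖ := by
        by_contra hlt
        exact hKnv β (lt_of_not_ge hlt) hβroot
      have hβ0 : β ≠ 0 := by
        intro h
        rw [h] at hβκ
        simp at hβκ
        linarith
      obtain ⟨Kt, hKt⟩ := (Polynomial.dvd_iff_isRoot).mpr hβroot
      have hKtne : Kt ≠ 0 := fun h => hKne (by rw [hKt, h, mul_zero])
      have hKtdeg : Kt.natDegree = d := by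
        have h1 : Kpoly.natDegree = (Polynomial.X - Polynomial.C β).natDegree + Kt.natDegree := by
          rw [hKt]
          exact Polynomial.natDegree_mul (Polynomial.X_sub_C_ne_zero β) hKtne
        rw [Polynomial.natDegree_X_sub_C, hKdeg'] at h1
        omega
      have hKtnv : ∀ z : ℂ, ‖z‖ < κ → Kt.eval z ≠ 0 := by
        intro z hz h0
        apply hKnv z hz
        rw [hKt, Polynomial.eval_mul, h0, mul_zero]
      -- new coefficient sequences
      set u' : ℕ → ℂ := fun k => Kt.coeff k / ((d.choose k : ℕ):ℂ) with hu'
      set ζ : ℂ := -(z0 * β⁻¹) with hζ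
      have hζρ : ‖ζ‖ < ρ := by
        rw [hζ]
        rw [norm_neg, norm_mul, norm_inv, ← div_eq_mul_inv]
        rw [div_lt_iff₀ (lt_of_lt_of_le hκ hβκ)]
        calc ‖z0‖ < κ * ρ := hz0
          _ ≤ ‖β‖ * ρ := by nlinarith
          _ = ρ * ‖β‖ := by ring
      have hβζ : β * ζ = -z0 := by
        rw [hζ]
        field_simp
      set c' : ℕ → ℂ := fun k => z0 * ((k:ℂ)+1) * c (k+1) - β * (((d:ℂ)+1-(k:ℂ)) * c k) with hc'
      have hP' : ∀ w : ℂ, ‖w‖ < ρ → (∑ k ∈ Finset.range (d+1), c' k * w^k) ≠ 0 := by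
        intro w hw h0
        refine hRnv ζ hζρ w hw ?_
        have hfac : ∑ k ∈ Finset.range (d+1), c' k * w^k
            = (-β) * ∑ k ∈ Finset.range (d+1), (((d:ℂ)+1-(k:ℂ)) * c k + ζ * ((k:ℂ)+1) * c (k+1)) * w^k := by
          rw [Finset.mul_sum]
          refine Finset.sum_congr rfl (fun k _ => ?_)
          rw [hc']
          have : z0 = -(β * ζ) := by rw [hβζ]; ring
          rw [this]
          ring
        rw [hfac] at h0
        rcases mul_eq_zero.mp h0 with h | h
        · exact absurd (neg_eq_zero.mp h) hβ0
        · exact h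
      have hK' : ∀ z : ℂ, ‖z‖ < κ → (∑ k ∈ Finset.range (d+1), (d.choose k : ℂ) * u' k * z^k) ≠ 0 := by
        intro z hz h0
        apply hKtnv z hz
        rw [Polynomial.eval_eq_sum_range' (lt_of_le_of_lt hKtdeg.le (Nat.lt_succ_self d))]
        refine Eq.trans ?_ h0
        refine Finset.sum_congr rfl (fun k hk => ?_)
        have hkd : k ≤ d := Nat.lt_succ_iff.mp (Finset.mem_range.mp hk)
        have hch : ((d.choose k : ℕ):ℂ) ≠ 0 := by exact_mod_cast (Nat.choose_pos hkd).ne'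
        rw [hu']
        field_simp
      have hres := ih c' u' κ ρ hκ hρ hP' hK' z0 hz0
      intro h0
      apply hres
      -- the composition identity
      set a : ℕ → ℂ := fun j => c j / (((d+1).choose j : ℕ):ℂ) with ha
      have hKtc : Kt.coeff (d+1) = 0 :=
        Polynomial.coeff_eq_zero_of_natDegree_lt (by omega)
      have hcoeffrel : ∀ j, Kpoly.coeff j = (Polynomial.X * Kt).coeff j - β * Kt.coeff j := by
        intro j
        rw [hKt, show (Polynomial.X - Polynomial.C β) * Kt
            = Polynomial.X * Kt - Polynomial.C β * Kt by ring]
        rw [Polynomial.coeff_sub, Polynomial.coeff_C_mul]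
      have hsplit : ∑ j ∈ Finset.range (d+2), Kpoly.coeff j * (a j * z0^j)
          = ∑ k ∈ Finset.range (d+1),
              (Kt.coeff k * (a (k+1) * z0^(k+1)) - β * (Kt.coeff k * (a k * z0^k))) := by
        have e1 : ∑ j ∈ Finset.range (d+2), Kpoly.coeff j * (a j * z0^j)
            = (∑ j ∈ Finset.range (d+2), (Polynomial.X * Kt).coeff j * (a j * z0^j))
              - ∑ j ∈ Finset.range (d+2), β * (Kt.coeff j * (a j * z0^j)) := by
          rw [← Finset.sum_sub_distrib]
          refine Finset.sum_congr rfl (fun j _ => ?_)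
          rw [hcoeffrel j]
          ring
        have e2 : ∑ j ∈ Finset.range (d+2), (Polynomial.X * Kt).coeff j * (a j * z0^j)
            = ∑ k ∈ Finset.range (d+1), Kt.coeff k * (a (k+1) * z0^(k+1)) := by
          have e2' := Finset.sum_range_succ' (fun j => (Polynomial.X * Kt).coeff j * (a j * z0^j)) (d+1)
          simp only [Polynomial.coeff_X_mul, Polynomial.coeff_X_mul_zero, zero_mul, add_zero] at e2'
          exact e2'
        have e3 : ∑ j ∈ Finset.range (d+2), β * (Kt.coeff j * (a j * z0^j))
            = ∑ k ∈ Finset.range (d+1), β * (Kt.coeff k * (a k * z0^k)) := by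
          have e3' := Finset.sum_range_succ (fun j => β * (Kt.coeff j * (a j * z0^j))) (d+1)
          simp only [hKtc, mul_zero, zero_mul, add_zero] at e3'
          exact e3'
        rw [e1, e2, e3, ← Finset.sum_sub_distrib]
      calc ∑ k ∈ Finset.range (d+1), u' k * c' k * z0^k
          = ∑ k ∈ Finset.range (d+1), ((d:ℂ)+1)
              * (Kt.coeff k * (a (k+1) * z0^(k+1)) - β * (Kt.coeff k * (a k * z0^k))) := by
            refine Finset.sum_congr rfl (fun k hk => ?_)
            have hkd : k ≤ d := Nat.lt_succ_iff.mp (Finset.mem_range.mp hk)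
            have hch : ((d.choose k : ℕ):ℂ) ≠ 0 := by exact_mod_cast (Nat.choose_pos hkd).ne'
            have hch1 : (((d+1).choose k : ℕ):ℂ) ≠ 0 := by
              exact_mod_cast (Nat.choose_pos (by omega : k ≤ d+1)).ne'
            have hch2 : (((d+1).choose (k+1) : ℕ):ℂ) ≠ 0 := by
              exact_mod_cast (Nat.choose_pos (by omega : k+1 ≤ d+1)).ne'
            have hbin1 : ((d:ℂ)+1) * ((d.choose k : ℕ):ℂ)
                = ((k:ℂ)+1) * (((d+1).choose (k+1) : ℕ):ℂ) := by
              have hn := Nat.add_one_mul_choose_eq d k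
              have hcast : (((d+1) * d.choose k : ℕ):ℂ) = (((d+1).choose (k+1) * (k+1) : ℕ):ℂ) := by
                exact_mod_cast congrArg (fun n : ℕ => (n:ℂ)) hn
              push_cast at hcast
              linear_combination hcast
            have hbin2 : ((d.choose k : ℕ):ℂ) * ((d:ℂ)+1) = (((d+1).choose k : ℕ):ℂ) * ((d:ℂ)+1-(k:ℂ)) := by
              have hn := Nat.choose_mul_succ_eq d k
              have hcast : ((d.choose k * (d+1) : ℕ):ℂ) = (((d+1).choose k * (d+1-k) : ℕ):ℂ) := by
                exact_mod_cast congrArg (fun n : ℕ => (n:ℂ)) hn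
              push_cast [Nat.cast_sub (le_trans hkd (Nat.le_succ d))] at hcast
              push_cast
              linear_combination hcast
            have e1 : ((d:ℂ)+1) * (c (k+1) / (((d+1).choose (k+1) : ℕ):ℂ))
                = (((k:ℂ)+1) * c (k+1)) / ((d.choose k : ℕ):ℂ) := by
              rw [← mul_div_assoc, div_eq_div_iff hch2 hch]
              linear_combination (c (k+1)) * hbin1
            have e2 : ((d:ℂ)+1) * (c k / (((d+1).choose k : ℕ):ℂ))
                = ((((d:ℂ)+1-(k:ℂ))) * c k) / ((d.choose k : ℕ):ℂ) := by
              rw [← mul_div_assoc, div_eq_div_iff hch1 hch]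
              linear_combination (c k) * hbin2
            simp only [hu', hc', ha]
            linear_combination (-(Kt.coeff k * z0^(k+1))) * e1 + (β * Kt.coeff k * z0^k) * e2
        _ = ((d:ℂ)+1) * ∑ k ∈ Finset.range (d+1),
              (Kt.coeff k * (a (k+1) * z0^(k+1)) - β * (Kt.coeff k * (a k * z0^k))) :=
            (Finset.mul_sum _ _ _).symm
        _ = ((d:ℂ)+1) * ∑ j ∈ Finset.range (d+2), Kpoly.coeff j * (a j * z0^j) := by rw [hsplit]
        _ = ((d:ℂ)+1) * ∑ j ∈ Finset.range (d+2), u j * c j * z0^j := by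
            congr 1
            refine Finset.sum_congr rfl (fun j hj => ?_)
            have hjd : j ≤ d+1 := Nat.lt_succ_iff.mp (Finset.mem_range.mp hj)
            have hch : (((d+1).choose j : ℕ):ℂ) ≠ 0 := by
              exact_mod_cast (Nat.choose_pos hjd).ne'
            rw [hKcoeff j (by omega), ha]
            field_simp
        _ = 0 := by rw [h0, mul_zero]

/-- Schur–Szegő composition, disk version (Proposition 2.5(b)). -/
theorem schur_szego_disk
    (d : ℕ) (c u : ℕ → ℂ) (κ ρ : ℝ) (hκ : 0 < κ) (hρ : 0 < ρ)
    (P : Polynomial ℂ) (hP : P = ∑ j ∈ Finset.range (d + 1), Polynomial.C (c j) * Polynomial.X ^ j)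
    (K : Polynomial ℂ) (hK : K = ∑ j ∈ Finset.range (d + 1),
      Polynomial.C ((d.choose j : ℂ) * u j) * Polynomial.X ^ j)
    (Q : Polynomial ℂ) (hQ : Q = ∑ j ∈ Finset.range (d + 1),
      Polynomial.C (u j * c j) * Polynomial.X ^ j)
    (hPnv : ∀ z : ℂ, ‖z‖ < ρ → P.eval z ≠ 0)
    (hKnv : ∀ z : ℂ, ‖z‖ < κ → K.eval z ≠ 0) :
    Q = 0 ∨ ∀ z : ℂ, ‖z‖ < κ * ρ → Q.eval z ≠ 0 := by
  right
  intro z0 hz0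
  have hPe : ∀ z : ℂ, P.eval z = ∑ j ∈ Finset.range (d+1), c j * z^j := by
    intro z; rw [hP, Polynomial.eval_finset_sum]; simp
  have hKe : ∀ z : ℂ, K.eval z = ∑ j ∈ Finset.range (d+1), (d.choose j : ℂ) * u j * z^j := by
    intro z; rw [hK, Polynomial.eval_finset_sum]; simp
  have hQe : Q.eval z0 = ∑ j ∈ Finset.range (d+1), u j * c j * z0^j := by
    rw [hQ, Polynomial.eval_finset_sum]; simp
  rw [hQe]
  exact szego_sum d c u κ ρ hκ hρ
    (fun z hz => by rw [← hPe z]; exact hPnv z hz)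
    (fun z hz => by rw [← hKe z]; exact hKnv z hz) z0 hz0
end

section
/- Let G = (V,E) be a finite graph with complex edge weights satisfying |λ_e| ≤ λ_max for all e, and suppose each key polynomial K_v(z) = Σ_{j=0}^{deg(G,v)} C(deg(G,v),j) u_j^{(v)} z^j has no zeros in the open disk {|z| < κ}, κ > 0. Then Z(G,λ,u;x) = Σ_{H⊆E} λ^H (Π_v u_{deg(H,v)}^{(v)}) Π_v x_v^{deg(H,v)} is either identically zero or nonzero whenever all |x_v| < κ/λ_max^{1/2}. -/
open Finset Polynomial

set_option linter.unusedSectionVars false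


lemma quad_root {a b c : ℂ} (ha : a ≠ 0) :
    ∃ t₁ t₂ : ℂ, (∀ t : ℂ, a*t^2 + b*t + c = a*(t - t₁)*(t - t₂)) ∧ t₁ * t₂ = c / a := by
  obtain ⟨s, hs⟩ := IsAlgClosed.exists_pow_nat_eq (k := ℂ) (b^2 - 4*a*c) (n := 2) (by norm_num)
  refine ⟨(-b + s)/(2*a), (-b - s)/(2*a), fun t => ?_, ?_⟩
  · field_simp
    ring_nf
    rw [hs]  -- guess; fix later
    ring
  · field_simp
    ring_nf
    rw [hs]
    ring

lemma asano {F : ℂ → ℂ → ℂ} {A B C D : ℂ} {κ₁ κ₂ : ℝ} (h1 : 0 < κ₁) (h2 : 0 < κ₂)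
    (hF : ∀ y y', F y y' = A + B*y + C*y' + D*(y*y'))
    (hnz : ∀ y y', ‖y‖ < κ₁ → ‖y'‖ < κ₂ → F y y' ≠ 0)
    (w : ℂ) (hw : ‖w‖ < κ₁ * κ₂) : A + D * w ≠ 0 := by
  intro h0
  by_cases hD : D = 0
  · have hA : A = 0 := by simpa [hD] using h0
    exact hnz 0 0 (by simpa using h1) (by simpa using h2) (by simp [hF, hA])
  · set c : ℝ := Real.sqrt κ₁ / Real.sqrt κ₂ with hc
    have hs1 : (0:ℝ) < Real.sqrt κ₁ := Real.sqrt_pos.mpr h1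
    have hs2 : (0:ℝ) < Real.sqrt κ₂ := Real.sqrt_pos.mpr h2
    have hcpos : 0 < c := div_pos hs1 hs2
    obtain ⟨t₁, t₂, hfac, hprod⟩ := quad_root (a := D) (b := B*c + C/c) (c := A) hD
    -- t₁ t₂ = A / D = -w
    have hAD : A / D = -w := by field_simp at h0 ⊢; linear_combination h0
    have habs : ‖t₁‖ * ‖t₂‖ < κ₁ * κ₂ := by
      rw [← norm_mul, hprod, hAD]
      simpa using hw
    have hex : ∃ t : ℂ, ‖t‖ < Real.sqrt κ₁ * Real.sqrt κ₂ ∧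
        D*t^2 + (B*c + C/c)*t + A = 0 := by
      have hR : Real.sqrt κ₁ * Real.sqrt κ₂ > 0 := mul_pos hs1 hs2
      by_cases h1' : ‖t₁‖ < Real.sqrt κ₁ * Real.sqrt κ₂
      · exact ⟨t₁, h1', by rw [hfac]; ring⟩
      · refine ⟨t₂, ?_, by rw [hfac]; ring⟩
        push_neg at h1'
        by_contra hcon
        push_neg at hcon
        have h3 := mul_le_mul h1' hcon hR.le (norm_nonneg t₁)
        nlinarith [Real.sq_sqrt h1.le, Real.sq_sqrt h2.le, Real.sqrt_nonneg κ₁, Real.sqrt_nonneg κ₂]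
    obtain ⟨t, ht, htq⟩ := hex
    have hy : ‖(c:ℂ)*t‖ < κ₁ := by
      have : ‖(c:ℂ)*t‖ = c * ‖t‖ := by
        simp [norm_mul, Complex.norm_real, abs_of_pos hcpos]
      rw [this]
      calc c * ‖t‖ < c * (Real.sqrt κ₁ * Real.sqrt κ₂) := by
            exact mul_lt_mul_of_pos_left ht hcpos
        _ = κ₁ := by
            rw [hc]; field_simp; nlinarith [Real.sq_sqrt h1.le]
    have hy' : ‖t/(c:ℂ)‖ < κ₂ := by
      have : ‖t/(c:ℂ)‖ = ‖t‖ / c := by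
        simp [norm_div, Complex.norm_real, abs_of_pos hcpos]
      rw [this]
      rw [div_lt_iff₀ hcpos]
      calc ‖t‖ < Real.sqrt κ₁ * Real.sqrt κ₂ := ht
        _ = κ₂ * c := by rw [hc]; field_simp; nlinarith [Real.sq_sqrt h2.le]
    refine hnz _ _ hy hy' ?_
    rw [hF]
    have hcne : (c:ℂ) ≠ 0 := by exact_mod_cast hcpos.ne'
    calc A + B*((c:ℂ)*t) + C*(t/(c:ℂ)) + D*(((c:ℂ)*t)*(t/(c:ℂ)))
        = D*t^2 + (B*(c:ℂ) + C/(c:ℂ))*t + A := by field_simp; ring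
      _ = 0 := htq


lemma list_prod_fin {M : Type*} [CommMonoid M] (L : List ℂ) (f : ℂ → M) :
    (L.map f).prod = ∏ i : Fin L.length, f (L.get i) := by
  induction L with
  | nil => simp
  | cons a l ih =>
      rw [List.map_cons, List.prod_cons, ih]
      exact (Fin.prod_univ_succ (fun i : Fin (l.length+1) => f ((a :: l).get i))).symm

lemma deriv_fin_prod (m : ℕ) (f : Fin m → Polynomial ℂ) :
    Polynomial.derivative (∏ i : Fin m, f i)
      = ∑ i : Fin m, (∏ j ∈ Finset.univ.erase i, f j) * Polynomial.derivative (f i) := by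
  rw [Finset.prod_eq_multiset_prod, Polynomial.derivative_prod]
  rw [Finset.sum_eq_multiset_sum]
  refine congrArg Multiset.sum (Multiset.map_congr rfl fun i hi => ?_)
  rw [Finset.prod_eq_multiset_prod, Finset.erase_val]

set_option maxHeartbeats 1600000 in
lemma split_lemma (d : ℕ) (u : ℕ → ℂ) (κ : ℝ) (hκ : 0 < κ)
    (hK : ∀ z : ℂ, ‖z‖ < κ →
      (∑ j ∈ range (d+2), (((d+1).choose j : ℕ) : ℂ) * u j * z^j) ≠ 0)
    (y : ℂ) (hy : ‖y‖ < κ) (z : ℂ) (hz : ‖z‖ < κ) :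
    (∑ j ∈ range (d+1), ((d.choose j : ℕ) : ℂ) * (u j + y * u (j+1)) * z^j) ≠ 0 := by
  intro hQ
  set K : Polynomial ℂ := ∑ j ∈ range (d+2), C ((((d+1).choose j : ℕ):ℂ) * u j) * X^j with hKdef
  have hKeval : ∀ t : ℂ, K.eval t = ∑ j ∈ range (d+2), (((d+1).choose j : ℕ):ℂ) * u j * t^j := by
    intro t; rw [hKdef]; simp [eval_finset_sum]
  have hKne : ∀ t : ℂ, ‖t‖ < κ → K.eval t ≠ 0 := fun t ht => by
    rw [hKeval]; exact hK t ht
  have hK0 : K ≠ 0 := by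
    intro h
    exact hKne 0 (by simpa using hκ) (by simp [h])
  have hKdeg : K.natDegree ≤ d + 1 := by
    rw [hKdef]
    refine natDegree_sum_le_of_forall_le _ _ (fun j hj => ?_)
    refine le_trans (natDegree_C_mul_le _ _) ?_
    simpa [natDegree_X_pow] using Nat.lt_succ_iff.mp (mem_range.mp hj)
  have hK'eval : K.derivative.eval z
      = ∑ j ∈ range (d+1), (((d+1).choose (j+1) : ℕ):ℂ) * u (j+1) * ((j:ℂ)+1) * z^j := by
    rw [hKdef, derivative_sum]
    simp only [derivative_C_mul_X_pow, eval_finset_sum, eval_mul, eval_C, eval_pow, eval_X]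
    rw [Finset.sum_range_succ' (fun j => ((((d+1).choose j : ℕ):ℂ) * u j * (j:ℂ)) * z^(j-1)) (d+1)]
    simp only [Nat.cast_zero, mul_zero, zero_mul, add_zero, Nat.add_sub_cancel]
    refine sum_congr rfl (fun j hj => ?_)
    push_cast
    ring
  have hI : ((d:ℂ)+1) * K.eval z + (y - z) * K.derivative.eval z
      = ((d:ℂ)+1) * ∑ j ∈ range (d+1), ((d.choose j : ℕ):ℂ) * (u j + y * u (j+1)) * z^j := by
    rw [hKeval z, hK'eval]
    have key1 : ∀ j : ℕ, ((d:ℂ)+1) * (d.choose j : ℕ) = (((d+1).choose (j+1) : ℕ):ℂ) * ((j:ℂ)+1) := by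
      intro j
      have h := Nat.add_one_mul_choose_eq d j
      have h2 : (((d+1) * d.choose j : ℕ) : ℂ) = (((d+1).choose (j+1) * (j+1) : ℕ) : ℂ) := by
        exact_mod_cast congrArg (Nat.cast (R := ℂ)) h
      push_cast at h2
      exact h2
    have key2 : ∀ j : ℕ, j ≤ d → ((d:ℂ)+1) * (d.choose j : ℕ) = ((d:ℂ)+1-(j:ℂ)) * (((d+1).choose j : ℕ):ℂ) := by
      intro j hj
      have h := Nat.choose_succ_right_eq (d+1) j
      have h2 := congrArg (Nat.cast (R := ℂ)) h
      push_cast [Nat.cast_sub (show j ≤ d+1 by omega)] at h2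
      rw [key1 j]
      linear_combination h2
    set A : ℕ → ℂ := fun j => (((d+1).choose j : ℕ):ℂ) * u j with hA
    set B : ℕ → ℂ := fun j => (((d+1).choose (j+1) : ℕ):ℂ) * u (j+1) * ((j:ℂ)+1) with hB
    have E1 : (∑ j ∈ range (d+2), A j * z^j)
        = (∑ j ∈ range (d+1), A j * z^j) + A (d+1) * z^(d+1) := sum_range_succ _ _
    have E2 : z * (∑ j ∈ range (d+1), B j * z^j)
        = (∑ j ∈ range (d+1), (j:ℂ) * A j * z^j) + ((d:ℂ)+1) * A (d+1) * z^(d+1) := by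
      rw [mul_sum]
      have l1 : ∑ j ∈ range (d+1), z * (B j * z^j) = ∑ j ∈ range (d+1), B j * z^(j+1) :=
        sum_congr rfl (fun j _ => by ring)
      rw [l1, sum_range_succ]
      have l2 : ∑ j ∈ range (d+1), (j:ℂ) * A j * z^j = ∑ j ∈ range d, B j * z^(j+1) := by
        rw [sum_range_succ' (fun j => (j:ℂ) * A j * z^j) d]
        simp only [Nat.cast_zero, zero_mul, add_zero, mul_zero]
        refine sum_congr rfl (fun j hj => ?_)
        rw [hA, hB]
        push_cast
        ring
      rw [← l2]
      have l3 : B d = ((d:ℂ)+1) * A (d+1) := by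
        rw [hA, hB]
        push_cast
        ring
      rw [l3]
    have M1 : ((d:ℂ)+1) * (∑ j ∈ range (d+1), A j * z^j)
        = ∑ j ∈ range (d+1), ((d:ℂ)+1) * A j * z^j := by
      rw [mul_sum]
      exact sum_congr rfl (fun j _ => by ring)
    have M2 : y * (∑ j ∈ range (d+1), B j * z^j)
        = ∑ j ∈ range (d+1), y * (B j * z^j) := mul_sum _ _ _
    have E3 : (∑ j ∈ range (d+1), ((d:ℂ)+1) * A j * z^j) + (∑ j ∈ range (d+1), y * (B j * z^j))
          - (∑ j ∈ range (d+1), (j:ℂ) * A j * z^j)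
        = ((d:ℂ)+1) * ∑ j ∈ range (d+1), ((d.choose j : ℕ):ℂ) * (u j + y * u (j+1)) * z^j := by
      rw [← sum_add_distrib, ← sum_sub_distrib, mul_sum]
      refine sum_congr rfl (fun j hj => ?_)
      have hj' : j ≤ d := Nat.lt_succ_iff.mp (mem_range.mp hj)
      have k1 := key1 j
      have k2 := key2 j hj'
      simp only [hA, hB]
      linear_combination (-(u j * z^j)) * k2 - (y * u (j+1) * z^j) * k1
    linear_combination ((d:ℂ)+1) * E1 - E2 + M1 + M2 + E3
  have hmain : ((d:ℂ)+1) * K.eval z + (y - z) * K.derivative.eval z = 0 := by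
    rw [hI, hQ, mul_zero]
  -- factor K by its roots
  have hsplits : K.Splits := IsAlgClosed.splits K
  have hfact := hsplits.eq_prod_roots
  set L : List ℂ := K.roots.toList with hL
  have hLM : (L : Multiset ℂ) = K.roots := Multiset.coe_toList _
  set m := L.length with hm
  set r : Fin m → ℂ := L.get with hr
  set c := K.leadingCoeff with hc
  have hmd : m ≤ d + 1 := by
    rw [hm, hL, Multiset.length_toList]
    exact le_trans (Polynomial.card_roots' K) hKdeg
  have hKP : K = C c * ∏ i : Fin m, (X - C (r i)) := by
    conv_lhs => rw [hfact]
    congr 1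
    rw [← hLM, Multiset.map_coe, Multiset.prod_coe]
    exact list_prod_fin L (fun a => X - C a)
  have hrk : ∀ i, κ ≤ ‖r i‖ := by
    intro i
    by_contra hlt
    push_neg at hlt
    refine hKne (r i) hlt ?_
    have : r i ∈ K.roots := by
      rw [← hLM]
      exact Multiset.mem_coe.mpr (List.get_mem L _)
    exact (Polynomial.mem_roots hK0).mp this
  have hzr : ∀ i, z - r i ≠ 0 := by
    intro i h
    have : z = r i := by linear_combination h
    rw [this] at hz
    exact absurd hz (not_lt.mpr (hrk i))
  have hPz : K.eval z = c * ∏ i : Fin m, (z - r i) := by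
    rw [hKP]; simp [eval_prod]
  have hKz0 : K.eval z ≠ 0 := hKne z hz
  have hlog : K.derivative.eval z = (c * ∏ i : Fin m, (z - r i)) * ∑ i : Fin m, (z - r i)⁻¹ := by
    conv_lhs => rw [hKP]
    rw [derivative_C_mul, deriv_fin_prod]
    simp only [eval_mul, eval_C, eval_finset_sum, eval_prod, eval_sub, eval_X,
      Polynomial.derivative_sub, Polynomial.derivative_X, Polynomial.derivative_C, sub_zero,
      eval_one, mul_one]
    have expand : (c * ∏ i : Fin m, (z - r i)) * ∑ i : Fin m, (z - r i)⁻¹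
        = ∑ i : Fin m, c * ((∏ j : Fin m, (z - r j)) * (z - r i)⁻¹) := by
      rw [mul_assoc, Finset.mul_sum, Finset.mul_sum]
    rw [expand, Finset.mul_sum]
    refine Finset.sum_congr rfl (fun i _ => ?_)
    congr 1
    have hpe := Finset.mul_prod_erase Finset.univ (fun j => z - r j) (Finset.mem_univ i)
    rw [← hpe]
    have hne := hzr i
    field_simp
  -- divide out K.eval z
  have hPne : c * (∏ i : Fin m, (z - r i)) ≠ 0 := by rw [← hPz]; exact hKz0
  have hS : ((d:ℂ)+1) + (y - z) * (∑ i : Fin m, (z - r i)⁻¹) = 0 := by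
    have h0 : (c * ∏ i : Fin m, (z - r i)) * (((d:ℂ)+1) + (y - z) * ∑ i : Fin m, (z - r i)⁻¹) = 0 := by
      rw [hlog, hPz] at hmain
      linear_combination hmain
    rcases mul_eq_zero.mp h0 with h | h
    · exact absurd h hPne
    · exact h
  set h : Fin m → ℂ := fun i => (y - r i) / (z - r i) with hh
  set s : ℂ := ∑ i, h i with hsdef
  have hone : ∀ i, 1 - h i = (z - y) * (z - r i)⁻¹ := by
    intro i
    have hne : z - r i ≠ 0 := hzr i
    rw [hh]
    field_simp
    ring
  have hsum1 : (m:ℂ) - s = (z - y) * ∑ i : Fin m, (z - r i)⁻¹ := by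
    calc (m:ℂ) - s = ∑ i : Fin m, (1 - h i) := by
          rw [Finset.sum_sub_distrib]
          simp [hsdef]
      _ = ∑ i : Fin m, (z - y) * (z - r i)⁻¹ := Finset.sum_congr rfl (fun i _ => hone i)
      _ = (z - y) * ∑ i : Fin m, (z - r i)⁻¹ := (Finset.mul_sum _ _ _).symm
  have hsval : s = (m:ℂ) - ((d:ℂ)+1) := by
    linear_combination -hsum1 + hS
  set a : ℝ := Complex.normSq z - κ^2 with ha
  set β : ℂ := y * (starRingEnd ℂ) z - ((κ^2 : ℝ) : ℂ) with hβ
  set γ : ℝ := Complex.normSq y - κ^2 with hγ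
  have identE : ∀ w : ℂ, Complex.normSq (y - w*z) - κ^2 * Complex.normSq (1-w)
      = a * Complex.normSq w - 2*(β * (starRingEnd ℂ) w).re + γ := by
    intro w
    simp only [ha, hβ, hγ, Complex.normSq_apply, Complex.mul_re, Complex.mul_im,
      Complex.sub_re, Complex.sub_im, Complex.one_re, Complex.one_im, Complex.conj_re,
      Complex.conj_im, Complex.ofReal_re, Complex.ofReal_im]
    ring
  have hfnn : ∀ i, (0:ℝ) ≤ a * Complex.normSq (h i) - 2*(β * (starRingEnd ℂ) (h i)).re + γ := by
    intro i
    rw [← identE]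
    have e1 : y - h i * z = r i * ((z - y) * (z - r i)⁻¹) := by
      have hne : z - r i ≠ 0 := hzr i
      rw [hh]
      field_simp
      ring
    have e2 : 1 - h i = (z - y) * (z - r i)⁻¹ := hone i
    rw [e1, e2, Complex.normSq_mul]
    have hr2 : κ^2 ≤ Complex.normSq (r i) := by
      rw [← Complex.sq_norm]
      have := hrk i
      nlinarith [hκ.le]
    nlinarith [Complex.normSq_nonneg ((z - y) * (z - r i)⁻¹)]
  set Sq : ℝ := ∑ i, Complex.normSq (h i) with hSq
  have hre : (β * (starRingEnd ℂ) s).re = ∑ i, (β * (starRingEnd ℂ) (h i)).re := by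
    rw [hsdef, map_sum, Finset.mul_sum, Complex.re_sum]
  have hsumnn : (0:ℝ) ≤ a * Sq - 2*(β * (starRingEnd ℂ) s).re + (m:ℝ)*γ := by
    have h0 := Finset.sum_nonneg (fun i (_ : i ∈ Finset.univ) => hfnn i)
    calc (0:ℝ) ≤ ∑ i, (a * Complex.normSq (h i) - 2*(β * (starRingEnd ℂ) (h i)).re + γ) := h0
      _ = a * Sq - 2*(β * (starRingEnd ℂ) s).re + (m:ℝ)*γ := by
          rw [Finset.sum_add_distrib, Finset.sum_sub_distrib, hre, ← Finset.mul_sum, ← Finset.mul_sum, hSq]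
          simp [Finset.card_univ, mul_comm]
  have hCS : Complex.normSq s ≤ (m:ℝ) * Sq := by
    have h1 : ‖s‖ ≤ ∑ i, ‖h i‖ := by
      rw [hsdef]
      simpa using norm_sum_le Finset.univ h
    have h2 : (∑ i, ‖h i‖)^2 ≤ (∑ _i : Fin m, (1:ℝ)^2) * ∑ i, (‖h i‖)^2 := by
      have := Finset.sum_mul_sq_le_sq_mul_sq Finset.univ (fun _ : Fin m => (1:ℝ)) (fun i => ‖h i‖)
      simpa using this
    have h3 : (∑ _i : Fin m, (1:ℝ)^2) = (m:ℝ) := by simp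
    have h4 : (∑ i, (‖h i‖)^2) = Sq := by
      rw [hSq]
      exact Finset.sum_congr rfl (fun i _ => Complex.sq_norm _)
    have h5 : Complex.normSq s = (‖s‖)^2 := (Complex.sq_norm s).symm
    have h6 : (‖s‖)^2 ≤ (∑ i, ‖h i‖)^2 := by
      have := norm_nonneg s
      nlinarith [h1]
    rw [h5]
    calc (‖s‖)^2 ≤ (∑ i, ‖h i‖)^2 := h6
      _ ≤ (∑ _i : Fin m, (1:ℝ)^2) * ∑ i, (‖h i‖)^2 := h2
      _ = (m:ℝ) * Sq := by rw [h3, h4]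
  have haneg : a ≤ 0 := by
    rw [ha, ← Complex.sq_norm]
    nlinarith [norm_nonneg z]
  have hbig : (0:ℝ) ≤ a * Complex.normSq s - 2*(m:ℝ)*(β * (starRingEnd ℂ) s).re + (m:ℝ)^2*γ := by
    have k1 : a * ((m:ℝ)*Sq) ≤ a * Complex.normSq s := mul_le_mul_of_nonpos_left hCS haneg
    have k2 : (0:ℝ) ≤ (m:ℝ) * (a * Sq - 2*(β * (starRingEnd ℂ) s).re + (m:ℝ)*γ) :=
      mul_nonneg (Nat.cast_nonneg m) hsumnn
    have k3 : (m:ℝ) * (a * Sq - 2*(β * (starRingEnd ℂ) s).re + (m:ℝ)*γ)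
        = a * ((m:ℝ)*Sq) - 2*(m:ℝ)*(β * (starRingEnd ℂ) s).re + (m:ℝ)^2*γ := by ring
    linarith [k1, k2, k3.le, k3.ge]
  have identF : a * Complex.normSq s - 2*(m:ℝ)*(β * (starRingEnd ℂ) s).re + (m:ℝ)^2*γ
      = Complex.normSq ((m:ℂ)*y - s*z) - κ^2 * Complex.normSq ((m:ℂ) - s) := by
    simp only [ha, hβ, hγ, Complex.normSq_apply, Complex.mul_re, Complex.mul_im,
      Complex.sub_re, Complex.sub_im, Complex.conj_re, Complex.conj_im,
      Complex.ofReal_re, Complex.ofReal_im, Complex.natCast_re, Complex.natCast_im]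
    ring
  rw [identF] at hbig
  -- substitute s
  set t : ℕ := d + 1 - m with ht
  have htc : ((t:ℕ):ℂ) = ((d:ℂ)+1) - (m:ℂ) := by
    rw [ht]
    push_cast [Nat.cast_sub hmd]
    ring
  have hms : (m:ℂ) - s = ((d:ℂ)+1) := by rw [hsval]; ring
  have hmy : (m:ℂ)*y - s*z = (m:ℂ)*y + (t:ℂ)*z := by
    rw [htc, hsval]
    ring
  rw [hms, hmy] at hbig
  have hnd : Complex.normSq ((d:ℂ)+1) = ((d:ℝ)+1)^2 := by
    have : ((d:ℂ)+1) = (((d:ℝ)+1 : ℝ) : ℂ) := by push_cast; ring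
    rw [this, Complex.normSq_ofReal]
    ring
  rw [hnd] at hbig
  -- final contradiction
  have habs : ‖(m:ℂ)*y + (t:ℂ)*z‖ ≤ (m:ℝ)*‖y‖ + (t:ℝ)*‖z‖ := by
    calc ‖(m:ℂ)*y + (t:ℂ)*z‖ ≤ ‖(m:ℂ)*y‖ + ‖(t:ℂ)*z‖ :=
          norm_add_le _ _
      _ = (m:ℝ)*‖y‖ + (t:ℝ)*‖z‖ := by
          rw [norm_mul, norm_mul]
          simp [Complex.norm_natCast]
  have hmt : (m:ℝ) + (t:ℝ) = (d:ℝ)+1 := by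
    have : (m + t : ℕ) = d + 1 := by omega
    exact_mod_cast congrArg (Nat.cast (R := ℝ)) this
  have hlt : (m:ℝ)*‖y‖ + (t:ℝ)*‖z‖ < ((d:ℝ)+1)*κ := by
    rcases Nat.eq_zero_or_pos m with hm0 | hm0
    · have ht1 : (1:ℝ) ≤ (t:ℝ) := by
        have : 1 ≤ t := by omega
        exact_mod_cast this
      rw [hm0]
      push_cast
      nlinarith [norm_nonneg z, norm_nonneg y]
    · have hm1 : (1:ℝ) ≤ (m:ℝ) := by exact_mod_cast hm0
      nlinarith [norm_nonneg z, norm_nonneg y, Nat.cast_nonneg (α := ℝ) t]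
  have hns : Complex.normSq ((m:ℂ)*y + (t:ℂ)*z) < (((d:ℝ)+1)*κ)^2 := by
    rw [← Complex.sq_norm]
    have hnn := norm_nonneg ((m:ℂ)*y + (t:ℂ)*z)
    nlinarith [habs, hlt, Nat.cast_nonneg (α := ℝ) m, Nat.cast_nonneg (α := ℝ) t,
      norm_nonneg y, norm_nonneg z]
  nlinarith [hbig, hns]


section Core
variable {V E : Type*} [Fintype V] [DecidableEq V] [Fintype E] [DecidableEq E]

variable (ε₁ ε₂ : E → V) (w : E → ℂ)

/-- degree of `v` in the spanning subgraph `S` -/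
def Dg (S : Finset E) (v : V) : ℕ :=
  (S.filter fun e => ε₁ e = v).card + (S.filter fun e => ε₂ e = v).card

/-- partial partition function -/
noncomputable def T (S : Finset E) (u : V → ℕ → ℂ) : ℂ :=
  ∑ H ∈ S.powerset, (∏ e ∈ H, w e) * ∏ v : V, u v (Dg ε₁ ε₂ H v)

def modA (a : V) (y : ℂ) (u : V → ℕ → ℂ) : V → ℕ → ℂ :=
  fun v j => if a = v then u v j + y * u v (j+1) else u v j

def shiftA (a : V) (u : V → ℕ → ℂ) : V → ℕ → ℂ :=
  fun v j => if a = v then u v (j+1) else u v j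

lemma shiftA_modA (a b : V) (y : ℂ) (u : V → ℕ → ℂ) :
    shiftA a (modA b y u) = modA b y (shiftA a u) := by
  funext v j
  by_cases h1 : a = v <;> by_cases h2 : b = v <;> simp [shiftA, modA, h1, h2]

lemma shiftA_comm (a b : V) (u : V → ℕ → ℂ) :
    shiftA a (shiftA b u) = shiftA b (shiftA a u) := by
  funext v j
  by_cases h1 : a = v <;> by_cases h2 : b = v <;> simp [shiftA, h1, h2]

lemma Dg_insert (e₀ : E) (H : Finset E) (he : e₀ ∉ H) (v : V) :
    Dg ε₁ ε₂ (insert e₀ H) v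
      = Dg ε₁ ε₂ H v + ((if ε₁ e₀ = v then 1 else 0) + (if ε₂ e₀ = v then 1 else 0)) := by
  unfold Dg
  rw [Finset.filter_insert, Finset.filter_insert]
  have k1 : e₀ ∉ H.filter fun e => ε₁ e = v := fun hh => he (Finset.mem_of_mem_filter _ hh)
  have k2 : e₀ ∉ H.filter fun e => ε₂ e = v := fun hh => he (Finset.mem_of_mem_filter _ hh)
  by_cases h1 : ε₁ e₀ = v <;> by_cases h2 : ε₂ e₀ = v <;>
    simp [h1, h2, Finset.card_insert_of_notMem, k1, k2] <;> omega

lemma prod_modA (u : V → ℕ → ℂ) (n : V → ℕ) (a : V) (y : ℂ) :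
    ∏ v : V, modA a y u v (n v)
      = (∏ v : V, u v (n v)) + y * ∏ v : V, shiftA a u v (n v) := by
  rw [← Finset.mul_prod_erase Finset.univ (fun v => modA a y u v (n v)) (Finset.mem_univ a),
      ← Finset.mul_prod_erase Finset.univ (fun v => u v (n v)) (Finset.mem_univ a),
      ← Finset.mul_prod_erase Finset.univ (fun v => shiftA a u v (n v)) (Finset.mem_univ a)]
  have h1 : ∀ v ∈ Finset.univ.erase a, modA a y u v (n v) = u v (n v) := by
    intro v hv
    have := Finset.ne_of_mem_erase hv
    simp [modA, if_neg (Ne.symm this)]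
  have h2 : ∀ v ∈ Finset.univ.erase a, shiftA a u v (n v) = u v (n v) := by
    intro v hv
    have := Finset.ne_of_mem_erase hv
    simp [shiftA, if_neg (Ne.symm this)]
  rw [Finset.prod_congr rfl h1, Finset.prod_congr rfl h2]
  simp only [modA, shiftA]
  norm_num
  ring

lemma T_modA (S : Finset E) (u : V → ℕ → ℂ) (a : V) (y : ℂ) :
    T ε₁ ε₂ w S (modA a y u) = T ε₁ ε₂ w S u + y * T ε₁ ε₂ w S (shiftA a u) := by
  unfold T
  rw [Finset.mul_sum, ← Finset.sum_add_distrib]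
  refine Finset.sum_congr rfl (fun H _ => ?_)
  rw [prod_modA]
  ring

lemma T_insert (S : Finset E) (e₀ : E) (he₀ : e₀ ∉ S) (u : V → ℕ → ℂ) :
    T ε₁ ε₂ w (insert e₀ S) u
      = T ε₁ ε₂ w S u + w e₀ * T ε₁ ε₂ w S (shiftA (ε₁ e₀) (shiftA (ε₂ e₀) u)) := by
  unfold T
  rw [Finset.sum_powerset_insert he₀]
  congr 1
  rw [Finset.mul_sum]
  refine Finset.sum_congr rfl (fun H hH => ?_)
  have heH : e₀ ∉ H := fun h => he₀ (Finset.mem_powerset.mp hH h)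
  rw [Finset.prod_insert heH]
  have hprod : ∏ v : V, u v (Dg ε₁ ε₂ (insert e₀ H) v)
      = ∏ v : V, shiftA (ε₁ e₀) (shiftA (ε₂ e₀) u) v (Dg ε₁ ε₂ H v) := by
    refine Finset.prod_congr rfl (fun v _ => ?_)
    rw [Dg_insert ε₁ ε₂ e₀ H heH v]
    by_cases h1 : ε₁ e₀ = v <;> by_cases h2 : ε₂ e₀ = v <;>
      simp [shiftA, h1, h2] <;> ring_nf
  rw [hprod]
  ring

lemma core (κ : ℝ) (hκ : 0 < κ) (hw : ∀ e, ‖w e‖ < κ * κ) :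
    ∀ (S : Finset E) (u : V → ℕ → ℂ),
    (∀ v : V, ∀ z : ℂ, ‖z‖ < κ →
      (∑ j ∈ range (Dg ε₁ ε₂ S v + 1), ((Dg ε₁ ε₂ S v).choose j : ℂ) * u v j * z^j) ≠ 0) →
    T ε₁ ε₂ w S u ≠ 0 := by
  intro S
  induction S using Finset.strongInduction with
  | _ S ih =>
    intro u hkey
    rcases S.eq_empty_or_nonempty with rfl | ⟨e₀, he₀⟩
    · -- base case
      have hu0 : ∀ v : V, u v 0 ≠ 0 := by
        intro v
        have h := hkey v 0 (by simpa using hκ)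
        have hD : Dg ε₁ ε₂ (∅ : Finset E) v = 0 := by simp [Dg]
        rw [hD] at h
        simpa using h
      unfold T
      simp only [Finset.powerset_empty, Finset.sum_singleton, Finset.prod_empty, one_mul]
      have hD : ∀ v : V, Dg ε₁ ε₂ (∅ : Finset E) v = 0 := by intro v; simp [Dg]
      rw [Finset.prod_congr rfl (fun v _ => by rw [hD v])]
      exact Finset.prod_ne_zero_iff.mpr (fun v _ => hu0 v)
    · set S' : Finset E := S.erase e₀ with hS'
      have he₀' : e₀ ∉ S' := Finset.notMem_erase _ _
      have hins : S = insert e₀ S' := (Finset.insert_erase he₀).symm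
      have hsub : S' ⊂ S := Finset.erase_ssubset he₀
      set a := ε₁ e₀ with haa
      set b := ε₂ e₀ with hbb
      -- degree bookkeeping
      have hDgS : ∀ v, Dg ε₁ ε₂ S v
          = Dg ε₁ ε₂ S' v + ((if a = v then 1 else 0) + (if b = v then 1 else 0)) := by
        intro v
        rw [hins, Dg_insert ε₁ ε₂ e₀ S' he₀' v]
      -- the key hypothesis for the modified weights
      have hkey' : ∀ (y y' : ℂ), ‖y‖ < κ → ‖y'‖ < κ →
          ∀ v : V, ∀ z : ℂ, ‖z‖ < κ →
          (∑ j ∈ range (Dg ε₁ ε₂ S' v + 1),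
            ((Dg ε₁ ε₂ S' v).choose j : ℂ) * (modA a y (modA b y' u)) v j * z^j) ≠ 0 := by
        intro y y' hy hy' v z hz
        by_cases h1 : a = v <;> by_cases h2 : b = v
        · -- loop at v
          have hd : Dg ε₁ ε₂ S v = Dg ε₁ ε₂ S' v + 2 := by rw [hDgS v]; simp [h1, h2]
          have hK1 := hkey v
          rw [hd] at hK1
          have hstep1 := fun (z' : ℂ) (hz' : ‖z'‖ < κ) =>
            split_lemma (Dg ε₁ ε₂ S' v + 1) (u v) κ hκ (fun t ht => hK1 t ht) y' hy' z' hz'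
          have hstep2 := split_lemma (Dg ε₁ ε₂ S' v) (fun j => u v j + y' * u v (j+1)) κ hκ
            hstep1 y hy z hz
          refine fun hc => hstep2 ?_
          rw [← hc]
          refine Finset.sum_congr rfl (fun j _ => ?_)
          simp [modA, h1, h2]
        · have hd : Dg ε₁ ε₂ S v = Dg ε₁ ε₂ S' v + 1 := by rw [hDgS v]; simp [h1, h2]
          have hK1 := hkey v
          rw [hd] at hK1
          have hstep := split_lemma (Dg ε₁ ε₂ S' v) (u v) κ hκ (fun t ht => hK1 t ht) y hy z hz
          refine fun hc => hstep ?_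
          rw [← hc]
          refine Finset.sum_congr rfl (fun j _ => ?_)
          simp [modA, h1, h2]
        · have hd : Dg ε₁ ε₂ S v = Dg ε₁ ε₂ S' v + 1 := by rw [hDgS v]; simp [h1, h2]
          have hK1 := hkey v
          rw [hd] at hK1
          have hstep := split_lemma (Dg ε₁ ε₂ S' v) (u v) κ hκ (fun t ht => hK1 t ht) y' hy' z hz
          refine fun hc => hstep ?_
          rw [← hc]
          refine Finset.sum_congr rfl (fun j _ => ?_)
          simp [modA, h1, h2]
        · have hd : Dg ε₁ ε₂ S v = Dg ε₁ ε₂ S' v := by rw [hDgS v]; simp [h1, h2]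
          have hK1 := hkey v
          rw [hd] at hK1
          refine fun hc => hK1 z hz ?_
          rw [← hc]
          refine Finset.sum_congr rfl (fun j _ => ?_)
          simp [modA, h1, h2]
      -- multiaffine form
      have hform : ∀ y y' : ℂ, T ε₁ ε₂ w S' (modA a y (modA b y' u))
          = T ε₁ ε₂ w S' u + (T ε₁ ε₂ w S' (shiftA a u)) * y
            + (T ε₁ ε₂ w S' (shiftA b u)) * y'
            + (T ε₁ ε₂ w S' (shiftA a (shiftA b u))) * (y * y') := by
        intro y y'
        rw [T_modA, T_modA, shiftA_modA, T_modA, shiftA_comm b a u]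
        ring
      have hnz : ∀ y y' : ℂ, ‖y‖ < κ → ‖y'‖ < κ →
          T ε₁ ε₂ w S' (modA a y (modA b y' u)) ≠ 0 := by
        intro y y' hy hy'
        exact ih S' hsub (modA a y (modA b y' u)) (hkey' y y' hy hy')
      have hAs := asano (F := fun y y' => T ε₁ ε₂ w S' (modA a y (modA b y' u)))
        (A := T ε₁ ε₂ w S' u) (B := T ε₁ ε₂ w S' (shiftA a u))
        (C := T ε₁ ε₂ w S' (shiftA b u)) (D := T ε₁ ε₂ w S' (shiftA a (shiftA b u)))
        hκ hκ (fun y y' => by simpa using (hform y y').trans (by ring)) hnz (w e₀) (hw e₀)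
      rw [hins, T_insert ε₁ ε₂ w S' e₀ he₀' u]
      intro hc
      refine hAs ?_
      rw [← hc]
      ring
end Core

/-- Theorem 3.2(b): disk version of the main theorem. -/
theorem main_theorem_disk
    {V E : Type*} [Fintype V] [DecidableEq V] [Fintype E] [DecidableEq E]
    (ε₁ ε₂ : E → V)
    (deg : Finset E → V → ℕ)
    (hdeg : ∀ (H : Finset E) (v : V),
      deg H v = (H.filter fun e => ε₁ e = v).card + (H.filter fun e => ε₂ e = v).card)
    (lam : E → ℂ) (lamMax : ℝ) (hMax : 0 < lamMax)
    (hlam : ∀ e, ‖lam e‖ ≤ lamMax)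
    (u : V → ℕ → ℂ) (κ : ℝ) (hκ : 0 < κ)
    (hkey : ∀ v : V, ∀ z : ℂ, ‖z‖ < κ →
      (∑ j ∈ Finset.range (deg Finset.univ v + 1),
        ((deg Finset.univ v).choose j : ℂ) * u v j * z ^ j) ≠ 0)
    (Z : (V → ℂ) → ℂ)
    (hZ : ∀ x : V → ℂ, Z x = ∑ H : Finset E,
      (∏ e ∈ H, lam e) * (∏ v : V, u v (deg H v)) * ∏ v : V, x v ^ deg H v) :
    (∀ x : V → ℂ, Z x = 0) ∨
      (∀ x : V → ℂ, (∀ v, ‖x v‖ < κ / Real.sqrt lamMax) → Z x ≠ 0) := by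
  right
  intro x hx
  rw [hZ x]
  have hDg : ∀ (H : Finset E) (v : V), deg H v = Dg ε₁ ε₂ H v := fun H v => hdeg H v
  set w : E → ℂ := fun e => lam e * (x (ε₁ e) * x (ε₂ e)) with hwdef
  -- bound on the edge weights
  set s : ℝ := Real.sqrt lamMax with hsdef
  have hs : 0 < s := Real.sqrt_pos.mpr hMax
  have hwlt : ∀ e, ‖w e‖ < κ * κ := by
    intro e
    have h1 : ‖w e‖ = ‖lam e‖ * (‖x (ε₁ e)‖ * ‖x (ε₂ e)‖) := by
      rw [hwdef]
      simp [map_mul]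
    have h2 : ‖x (ε₁ e)‖ * ‖x (ε₂ e)‖ < (κ/s) * (κ/s) :=
      mul_lt_mul'' (hx (ε₁ e)) (hx (ε₂ e)) (norm_nonneg _) (norm_nonneg _)
    have h3 : ‖lam e‖ * (‖x (ε₁ e)‖ * ‖x (ε₂ e)‖)
        ≤ lamMax * (‖x (ε₁ e)‖ * ‖x (ε₂ e)‖) :=
      mul_le_mul_of_nonneg_right (hlam e)
        (mul_nonneg (norm_nonneg _) (norm_nonneg _))
    have h4 : lamMax * (‖x (ε₁ e)‖ * ‖x (ε₂ e)‖)
        < lamMax * ((κ/s) * (κ/s)) := mul_lt_mul_of_pos_left h2 hMax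
    have h5 : lamMax * ((κ/s) * (κ/s)) = κ * κ := by
      have hss : s * s = lamMax := Real.mul_self_sqrt hMax.le
      field_simp
      nlinarith [hss]
    rw [h1]
    calc ‖lam e‖ * (‖x (ε₁ e)‖ * ‖x (ε₂ e)‖)
        ≤ lamMax * (‖x (ε₁ e)‖ * ‖x (ε₂ e)‖) := h3
      _ < lamMax * ((κ/s) * (κ/s)) := h4
      _ = κ * κ := h5
  have hkey' : ∀ v : V, ∀ z : ℂ, ‖z‖ < κ →
      (∑ j ∈ Finset.range (Dg ε₁ ε₂ Finset.univ v + 1),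
        ((Dg ε₁ ε₂ Finset.univ v).choose j : ℂ) * u v j * z ^ j) ≠ 0 := by
    intro v z hz
    have := hkey v z hz
    rw [hDg Finset.univ v] at this
    exact this
  have hcore := core ε₁ ε₂ w κ hκ hwlt Finset.univ u hkey'
  -- identify Z with T
  have hiden : (∑ H : Finset E,
      (∏ e ∈ H, lam e) * (∏ v : V, u v (deg H v)) * ∏ v : V, x v ^ deg H v)
      = T ε₁ ε₂ w Finset.univ u := by
    unfold T
    rw [Finset.powerset_univ]
    refine Finset.sum_congr rfl (fun H _ => ?_)
    have hw1 : ∏ e ∈ H, w e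
        = (∏ e ∈ H, lam e) * ((∏ e ∈ H, x (ε₁ e)) * (∏ e ∈ H, x (ε₂ e))) := by
      rw [hwdef]
      rw [Finset.prod_mul_distrib, Finset.prod_mul_distrib]
    have hfib : ∀ (g : E → V), (∏ e ∈ H, x (g e)) = ∏ v : V, x v ^ (H.filter fun e => g e = v).card := by
      intro g
      rw [← Finset.prod_fiberwise_of_maps_to (g := g) (t := Finset.univ) (fun e _ => Finset.mem_univ (g e)) (fun e => x (g e))]
      refine Finset.prod_congr rfl (fun v _ => ?_)
      calc ∏ e ∈ H.filter (fun e => g e = v), x (g e)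
          = ∏ e ∈ H.filter (fun e => g e = v), x v := by
            refine Finset.prod_congr rfl (fun e he => ?_)
            rw [(Finset.mem_filter.mp he).2]
        _ = x v ^ (H.filter fun e => g e = v).card := Finset.prod_const _
    have hxprod : ∏ v : V, x v ^ deg H v
        = (∏ e ∈ H, x (ε₁ e)) * (∏ e ∈ H, x (ε₂ e)) := by
      rw [hfib ε₁, hfib ε₂, ← Finset.prod_mul_distrib]
      refine Finset.prod_congr rfl (fun v _ => ?_)
      rw [hdeg H v, pow_add]
    have hu : ∏ v : V, u v (deg H v) = ∏ v : V, u v (Dg ε₁ ε₂ H v) :=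
      Finset.prod_congr rfl (fun v _ => by rw [hDg H v])
    rw [hw1, hxprod, hu]
    ring
  rw [hiden]
  exact hcore
end

section
/- Let G = (V,E) be a finite graph with nonnegative real edge weights λ_e. Then the multivariate matching polynomial μ̃(G,λ;x) = Σ_M λ^M Π_v x_v^{deg(M,v)}, where the sum is over all matchings M of G, is nonzero whenever Re x_v > 0 (indeed whenever |arg x_v| < π/2) for all v ∈ V. -/
set_option linter.unusedSectionVars false
open Real Finset

namespace HLaux

variable {V E : Type*} [Fintype V] [DecidableEq V] [Fintype E] [DecidableEq E]
variable (ε₁ ε₂ : E → V) (lam : E → ℝ) (x : V → ℂ)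

def Matchn (M : Finset E) : Prop :=
  (∀ e ∈ M, ε₁ e ≠ ε₂ e) ∧
    ∀ e ∈ M, ∀ f ∈ M, e ≠ f →
      ε₁ e ≠ ε₁ f ∧ ε₁ e ≠ ε₂ f ∧ ε₂ e ≠ ε₁ f ∧ ε₂ e ≠ ε₂ f

instance instMatchnDec {V E : Type*} [DecidableEq V] [DecidableEq E]
    (ε₁ ε₂ : E → V) : DecidablePred (Matchn ε₁ ε₂) := fun M => by
  unfold Matchn; infer_instance

def mset (S : Finset V) : Finset (Finset E) :=
  Finset.univ.filter fun M => Matchn ε₁ ε₂ M ∧ ∀ e ∈ M, ε₁ e ∈ S ∧ ε₂ e ∈ S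

noncomputable def q (S : Finset V) : ℂ :=
  ∑ M ∈ mset ε₁ ε₂ S, ∏ e ∈ M, ((lam e : ℂ) * (x (ε₁ e) * x (ε₂ e)))

def other (v : V) (e : E) : V := if ε₁ e = v then ε₂ e else ε₁ e

lemma other_spec {v : V} {e : E} (h : ε₁ e = v ∨ ε₂ e = v) (hl : ε₁ e ≠ ε₂ e) :
    (ε₁ e = v ∧ other ε₁ ε₂ v e = ε₂ e) ∨ (ε₂ e = v ∧ other ε₁ ε₂ v e = ε₁ e) := by
  unfold other
  rcases h with h | h
  · exact Or.inl ⟨h, if_pos h⟩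
  · by_cases h1 : ε₁ e = v
    · exact Or.inl ⟨h1, if_pos h1⟩
    · exact Or.inr ⟨h, if_neg h1⟩

def Ev (S : Finset V) (v : V) : Finset E :=
  Finset.univ.filter fun e => (ε₁ e = v ∨ ε₂ e = v) ∧ ε₁ e ≠ ε₂ e ∧ ε₁ e ∈ S ∧ ε₂ e ∈ S

lemma matchn_mono {M M' : Finset E} (h : Matchn ε₁ ε₂ M) (hs : M' ⊆ M) : Matchn ε₁ ε₂ M' :=
  ⟨fun e he => h.1 e (hs he), fun e he f hf hne => h.2 e (hs he) f (hs hf) hne⟩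

lemma q_empty : q ε₁ ε₂ lam x (∅ : Finset V) = 1 := by
  have : mset ε₁ ε₂ (∅ : Finset V) = {(∅ : Finset E)} := by
    ext M
    simp only [mset, mem_filter, mem_univ, true_and, mem_singleton]
    constructor
    · rintro ⟨-, h⟩
      ext e; simp only [Finset.notMem_empty, iff_false]
      intro he; exact absurd (h e he).1 (Finset.notMem_empty _)
    · rintro rfl
      exact ⟨⟨fun e he => absurd he (Finset.notMem_empty _),
        fun e he => absurd he (Finset.notMem_empty _)⟩,
        fun e he => absurd he (Finset.notMem_empty _)⟩
  rw [q, this, Finset.sum_singleton, Finset.prod_empty]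

lemma q_rec (S : Finset V) (v : V) (hv : v ∈ S) :
    q ε₁ ε₂ lam x S = q ε₁ ε₂ lam x (S.erase v) +
      x v * ∑ e ∈ Ev ε₁ ε₂ S v,
        (lam e : ℂ) * (x (other ε₁ ε₂ v e) *
          q ε₁ ε₂ lam x ((S.erase v).erase (other ε₁ ε₂ v e))) := by
  classical
  set c : E → ℂ := fun e => (lam e : ℂ) * (x (ε₁ e) * x (ε₂ e)) with hc
  set atv : E → Prop := fun e => ε₁ e = v ∨ ε₂ e = v with hatv
  -- split into covered / uncovered matchings
  have hsplit : q ε₁ ε₂ lam x S =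
      (∑ M ∈ (mset ε₁ ε₂ S).filter (fun M => ∃ e ∈ M, atv e), ∏ e ∈ M, c e)
      + ∑ M ∈ (mset ε₁ ε₂ S).filter (fun M => ¬ ∃ e ∈ M, atv e), ∏ e ∈ M, c e :=
    (Finset.sum_filter_add_sum_filter_not _ _ _).symm
  have huncov : (mset ε₁ ε₂ S).filter (fun M => ¬ ∃ e ∈ M, atv e)
      = mset ε₁ ε₂ (S.erase v) := by
    ext M
    simp only [mset, Finset.mem_filter, Finset.mem_univ, true_and, not_exists, not_and, hatv,
      not_or]
    constructor
    · rintro ⟨⟨hm, hend⟩, hnc⟩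
      refine ⟨hm, fun e he => ?_⟩
      obtain ⟨h1, h2⟩ := hend e he
      obtain ⟨h3, h4⟩ := hnc e he
      exact ⟨Finset.mem_erase.2 ⟨h3, h1⟩, Finset.mem_erase.2 ⟨h4, h2⟩⟩
    · rintro ⟨hm, hend⟩
      refine ⟨⟨hm, fun e he => ⟨(Finset.mem_erase.1 (hend e he).1).2,
        (Finset.mem_erase.1 (hend e he).2).2⟩⟩, fun e he => ?_⟩
      exact ⟨(Finset.mem_erase.1 (hend e he).1).1, (Finset.mem_erase.1 (hend e he).2).1⟩
  -- the covering edge is unique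
  have hcard : ∀ M ∈ mset ε₁ ε₂ S, (∃ e ∈ M, atv e) → (M.filter atv).card = 1 := by
    rintro M hM ⟨e, he, hate⟩
    rw [Finset.card_eq_one]
    refine ⟨e, ?_⟩
    ext f
    simp only [Finset.mem_filter, Finset.mem_singleton]
    constructor
    · rintro ⟨hf, hatf⟩
      by_contra hne
      have hm := ((Finset.mem_filter.1 hM).2.1 : Matchn ε₁ ε₂ M)
      obtain ⟨q1, q2, q3, q4⟩ := hm.2 f hf e he hne
      rcases hatf with h | h <;> rcases hate with h' | h'
      · exact q1 (h.trans h'.symm)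
      · exact q2 (h.trans h'.symm)
      · exact q3 (h.trans h'.symm)
      · exact q4 (h.trans h'.symm)
    · rintro rfl; exact ⟨he, hate⟩
  -- rewrite the covered sum as a sum over (matching, covering edge) pairs
  have hcov1 : ∑ M ∈ (mset ε₁ ε₂ S).filter (fun M => ∃ e ∈ M, atv e), ∏ e ∈ M, c e
      = ∑ p ∈ (mset ε₁ ε₂ S).sigma (fun M => M.filter atv), ∏ e ∈ p.1, c e := by
    rw [Finset.sum_sigma, Finset.sum_filter]
    refine Finset.sum_congr rfl fun M hM => ?_
    by_cases h : ∃ e ∈ M, atv e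
    · rw [if_pos h]
      dsimp only
      rw [Finset.sum_const, hcard M hM h, one_smul]
    · rw [if_neg h]
      have hempty : M.filter atv = ∅ := by
        rw [Finset.filter_eq_empty_iff]
        intro e he hate; exact h ⟨e, he, hate⟩
      rw [hempty, Finset.sum_empty]
  -- the bijection (M, e) ↦ (e, M.erase e)
  have hbij : ∑ p ∈ (mset ε₁ ε₂ S).sigma (fun M => M.filter atv), ∏ e ∈ p.1, c e
      = ∑ p ∈ (Ev ε₁ ε₂ S v).sigma
          (fun e => mset ε₁ ε₂ ((S.erase v).erase (other ε₁ ε₂ v e))),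
          c p.1 * ∏ e ∈ p.2, c e := by
    refine Finset.sum_bij' (fun p _ => ⟨p.2, p.1.erase p.2⟩)
      (fun p _ => ⟨insert p.1 p.2, p.1⟩) ?_ ?_ ?_ ?_ ?_
    · -- forward membership
      rintro ⟨M, e⟩ hp
      obtain ⟨hM, he⟩ := Finset.mem_sigma.1 hp
      obtain ⟨heM, hate⟩ := Finset.mem_filter.1 he
      obtain ⟨hm, hend⟩ := (Finset.mem_filter.1 hM).2
      have hnl : ε₁ e ≠ ε₂ e := hm.1 e heM
      rw [Finset.mem_sigma]
      constructor
      · simp only [Ev, Finset.mem_filter, Finset.mem_univ, true_and]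
        exact ⟨hate, hnl, hend e heM⟩
      · simp only [mset, Finset.mem_filter, Finset.mem_univ, true_and]
        refine ⟨matchn_mono ε₁ ε₂ hm (Finset.erase_subset _ _), ?_⟩
        intro f hf
        obtain ⟨hfe, hfM⟩ := Finset.mem_erase.1 hf
        obtain ⟨q1, q2, q3, q4⟩ := hm.2 e heM f hfM (Ne.symm hfe)
        obtain ⟨hf1, hf2⟩ := hend f hfM
        rcases other_spec ε₁ ε₂ hate hnl with ⟨hv1, ho⟩ | ⟨hv1, ho⟩ <;> rw [ho]
        · exact ⟨Finset.mem_erase.2 ⟨Ne.symm q3,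
              Finset.mem_erase.2 ⟨fun h => q1 (hv1.trans h.symm), hf1⟩⟩,
            Finset.mem_erase.2 ⟨Ne.symm q4,
              Finset.mem_erase.2 ⟨fun h => q2 (hv1.trans h.symm), hf2⟩⟩⟩
        · exact ⟨Finset.mem_erase.2 ⟨Ne.symm q1,
              Finset.mem_erase.2 ⟨fun h => q3 (hv1.trans h.symm), hf1⟩⟩,
            Finset.mem_erase.2 ⟨Ne.symm q2,
              Finset.mem_erase.2 ⟨fun h => q4 (hv1.trans h.symm), hf2⟩⟩⟩
    · -- backward membership
      rintro ⟨e, M'⟩ hp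
      obtain ⟨he, hM'⟩ := Finset.mem_sigma.1 hp
      simp only [Ev, Finset.mem_filter, Finset.mem_univ, true_and] at he
      obtain ⟨hate, hnl, he1, he2⟩ := he
      obtain ⟨hm', hend'⟩ := (Finset.mem_filter.1 hM').2
      have hkey : ∀ f ∈ M', ε₁ e ≠ ε₁ f ∧ ε₁ e ≠ ε₂ f ∧ ε₂ e ≠ ε₁ f ∧ ε₂ e ≠ ε₂ f := by
        intro f hf
        obtain ⟨hf1, hf2⟩ := hend' f hf
        obtain ⟨hao, haa⟩ := Finset.mem_erase.1 hf1
        obtain ⟨hbo, hbb⟩ := Finset.mem_erase.1 hf2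
        obtain ⟨hav, _⟩ := Finset.mem_erase.1 haa
        obtain ⟨hbv, _⟩ := Finset.mem_erase.1 hbb
        rcases other_spec ε₁ ε₂ hate hnl with ⟨hv1, ho⟩ | ⟨hv1, ho⟩
        · rw [ho] at hao hbo
          exact ⟨fun h => hav (h.symm.trans hv1), fun h => hbv (h.symm.trans hv1),
            Ne.symm hao, Ne.symm hbo⟩
        · rw [ho] at hao hbo
          exact ⟨Ne.symm hao, Ne.symm hbo,
            fun h => hav (h.symm.trans hv1), fun h => hbv (h.symm.trans hv1)⟩
      have hmemS : ∀ f ∈ M', ε₁ f ∈ S ∧ ε₂ f ∈ S := by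
        intro f hf
        obtain ⟨hf1, hf2⟩ := hend' f hf
        exact ⟨Finset.mem_of_mem_erase (Finset.mem_of_mem_erase hf1),
          Finset.mem_of_mem_erase (Finset.mem_of_mem_erase hf2)⟩
      rw [Finset.mem_sigma]
      constructor
      · simp only [mset, Finset.mem_filter, Finset.mem_univ, true_and]
        constructor
        · constructor
          · intro f hf
            rcases Finset.mem_insert.1 hf with rfl | hf'
            · exact hnl
            · exact hm'.1 f hf'
          · intro f hf g hg hne
            rcases Finset.mem_insert.1 hf with rfl | hf' <;>
              rcases Finset.mem_insert.1 hg with rfl | hg'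
            · exact absurd rfl hne
            · exact hkey g hg'
            · obtain ⟨k1, k2, k3, k4⟩ := hkey f hf'
              exact ⟨Ne.symm k1, Ne.symm k3, Ne.symm k2, Ne.symm k4⟩
            · exact hm'.2 f hf' g hg' hne
        · intro f hf
          rcases Finset.mem_insert.1 hf with rfl | hf'
          · exact ⟨he1, he2⟩
          · exact hmemS f hf'
      · exact Finset.mem_filter.2 ⟨Finset.mem_insert_self _ _, hate⟩
    · -- left inverse
      rintro ⟨M, e⟩ hp
      obtain ⟨hM, he⟩ := Finset.mem_sigma.1 hp
      have heM : e ∈ M := (Finset.mem_filter.1 he).1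
      simp only [Finset.insert_erase heM]
    · -- right inverse
      rintro ⟨e, M'⟩ hp
      obtain ⟨he, hM'⟩ := Finset.mem_sigma.1 hp
      have heM' : e ∉ M' := by
        intro h
        obtain ⟨hf1, _⟩ := ((Finset.mem_filter.1 hM').2 : Matchn ε₁ ε₂ M' ∧ _).2 e h
        simp only [Ev, Finset.mem_filter, Finset.mem_univ, true_and] at he
        rcases he.1 with hv1 | hv1
        · exact (Finset.mem_erase.1 (Finset.mem_erase.1 hf1).2).1 hv1
        · obtain ⟨hf1', hf2'⟩ := ((Finset.mem_filter.1 hM').2).2 e h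
          exact (Finset.mem_erase.1 (Finset.mem_erase.1 hf2').2).1 hv1
      simp only [Finset.erase_insert heM']
    · -- values agree
      rintro ⟨M, e⟩ hp
      obtain ⟨hM, he⟩ := Finset.mem_sigma.1 hp
      have heM : e ∈ M := (Finset.mem_filter.1 he).1
      exact (Finset.mul_prod_erase M c heM).symm
  -- assemble
  rw [hsplit, huncov, hcov1, hbij, Finset.sum_sigma, add_comm]
  congr 1
  rw [Finset.mul_sum]
  refine Finset.sum_congr rfl fun e he => ?_
  simp only [Ev, Finset.mem_filter, Finset.mem_univ, true_and] at he
  obtain ⟨hate, hnl, -, -⟩ := he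
  dsimp only
  rw [← Finset.mul_sum]
  have hq : (∑ M' ∈ mset ε₁ ε₂ ((S.erase v).erase (other ε₁ ε₂ v e)), ∏ f ∈ M', c f)
      = q ε₁ ε₂ lam x ((S.erase v).erase (other ε₁ ε₂ v e)) := rfl
  rw [hq]
  rcases other_spec ε₁ ε₂ hate hnl with ⟨hv1, ho⟩ | ⟨hv1, ho⟩ <;>
    simp only [hc, ho, hv1] <;> ring

lemma re_inv_pos {z : ℂ} (hz : 0 < z.re) : 0 < (z⁻¹).re := by
  rw [Complex.inv_re]
  refine div_pos hz (Complex.normSq_pos.2 fun h => ?_)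
  rw [h] at hz; simp at hz

lemma one_add_mul_ne_zero {a b : ℂ} (ha : 0 < a.re) (hb : 0 ≤ b.re) : 1 + a * b ≠ 0 := by
  intro h
  have ha0 : a ≠ 0 := fun h' => by rw [h'] at ha; simp at ha
  have h2 : a * b = -1 := by linear_combination h
  have hb' : b = -a⁻¹ := by
    calc b = a⁻¹ * (a * b) := by rw [← mul_assoc, inv_mul_cancel₀ ha0, one_mul]
    _ = -a⁻¹ := by rw [h2]; ring
  have h3 := re_inv_pos ha
  rw [hb'] at hb
  simp only [Complex.neg_re] at hb
  linarith

lemma other_mem_erase {S : Finset V} {v : V} {e : E}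
    (hate : ε₁ e = v ∨ ε₂ e = v) (hnl : ε₁ e ≠ ε₂ e) (h1 : ε₁ e ∈ S) (h2 : ε₂ e ∈ S) :
    other ε₁ ε₂ v e ∈ S.erase v := by
  rcases other_spec ε₁ ε₂ hate hnl with ⟨hv1, ho⟩ | ⟨hv1, ho⟩ <;> rw [ho]
  · exact Finset.mem_erase.2 ⟨fun h => hnl (hv1.trans h.symm), h2⟩
  · exact Finset.mem_erase.2 ⟨fun h => hnl (h.trans hv1.symm), h1⟩

theorem q_key (hlam : ∀ e, 0 ≤ lam e) (hx : ∀ v, 0 < (x v).re) (S : Finset V) :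
    q ε₁ ε₂ lam x S ≠ 0 ∧ ∀ v ∈ S,
      0 < (x v * q ε₁ ε₂ lam x (S.erase v) / q ε₁ ε₂ lam x S).re := by
  induction S using Finset.strongInduction with
  | _ S IH =>
  have main : ∀ v ∈ S, q ε₁ ε₂ lam x S ≠ 0 ∧
      0 < (x v * q ε₁ ε₂ lam x (S.erase v) / q ε₁ ε₂ lam x S).re := by
    intro v hv
    obtain ⟨hq', hrat⟩ := IH (S.erase v) (Finset.erase_ssubset hv)
    set w : ℂ := ∑ e ∈ Ev ε₁ ε₂ S v, (lam e : ℂ) *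
      (x (other ε₁ ε₂ v e) * q ε₁ ε₂ lam x ((S.erase v).erase (other ε₁ ε₂ v e)) /
        q ε₁ ε₂ lam x (S.erase v)) with hw
    have hwre : 0 ≤ w.re := by
      rw [hw, Complex.re_sum]
      refine Finset.sum_nonneg fun e he => ?_
      rw [Complex.re_ofReal_mul]
      refine mul_nonneg (hlam e) ?_
      simp only [Ev, Finset.mem_filter, Finset.mem_univ, true_and] at he
      obtain ⟨hate, hnl, h1, h2⟩ := he
      exact le_of_lt (hrat _ (other_mem_erase ε₁ ε₂ hate hnl h1 h2))
    have hrec := q_rec ε₁ ε₂ lam x S v hv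
    have hsum : ∑ e ∈ Ev ε₁ ε₂ S v, (lam e : ℂ) *
        (x (other ε₁ ε₂ v e) * q ε₁ ε₂ lam x ((S.erase v).erase (other ε₁ ε₂ v e)))
        = q ε₁ ε₂ lam x (S.erase v) * w := by
      rw [hw, Finset.mul_sum]
      refine Finset.sum_congr rfl fun e he => ?_
      field_simp
    rw [hsum] at hrec
    have hfact : q ε₁ ε₂ lam x S = q ε₁ ε₂ lam x (S.erase v) * (1 + x v * w) := by
      rw [hrec]; ring
    have h1 : (1 : ℂ) + x v * w ≠ 0 := one_add_mul_ne_zero (hx v) hwre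
    have hqS : q ε₁ ε₂ lam x S ≠ 0 := by
      rw [hfact]; exact mul_ne_zero hq' h1
    refine ⟨hqS, ?_⟩
    have hxv : x v ≠ 0 := fun h => by have := hx v; rw [h] at this; simp at this
    have heq : x v * q ε₁ ε₂ lam x (S.erase v) / q ε₁ ε₂ lam x S = ((x v)⁻¹ + w)⁻¹ := by
      rw [hfact]
      have h4 : (x v)⁻¹ + w = (x v)⁻¹ * (1 + x v * w) := by
        rw [mul_add, mul_one, ← mul_assoc, inv_mul_cancel₀ hxv, one_mul]
      rw [h4, mul_inv, inv_inv]
      field_simp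
    rw [heq]
    refine re_inv_pos ?_
    rw [Complex.add_re]
    have := re_inv_pos (hx v)
    linarith
  refine ⟨?_, fun v hv => (main v hv).2⟩
  rcases S.eq_empty_or_nonempty with rfl | ⟨v, hv⟩
  · rw [q_empty]; exact one_ne_zero
  · exact (main v hv).1

lemma prod_pow_card (g : E → V) (M : Finset E) :
    ∏ v : V, x v ^ (M.filter fun e => g e = v).card = ∏ e ∈ M, x (g e) := by
  rw [← Finset.prod_fiberwise_of_maps_to' (fun e _ => Finset.mem_univ (g e)) x]
  refine Finset.prod_congr rfl fun v _ => ?_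
  rw [Finset.prod_const]

end HLaux

/-- The multivariate Heilmann–Lieb theorem: the multivariate matching
polynomial with nonnegative edge weights is nonvanishing on the open right
half-plane. -/
theorem multivariate_heilmann_lieb
    {V E : Type*} [Fintype V] [DecidableEq V] [Fintype E] [DecidableEq E]
    (ε₁ ε₂ : E → V)   -- endpoints of each edge (a loop has ε₁ e = ε₂ e)
    (IsMatching : Finset E → Prop) [DecidablePred IsMatching]
    (hmatch : ∀ M : Finset E, IsMatching M ↔
      ((∀ e ∈ M, ε₁ e ≠ ε₂ e) ∧
        ∀ e ∈ M, ∀ f ∈ M, e ≠ f →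
          ε₁ e ≠ ε₁ f ∧ ε₁ e ≠ ε₂ f ∧ ε₂ e ≠ ε₁ f ∧ ε₂ e ≠ ε₂ f))
    (deg : Finset E → V → ℕ)
    (hdeg : ∀ (H : Finset E) (v : V),
      deg H v = (H.filter fun e => ε₁ e = v).card + (H.filter fun e => ε₂ e = v).card)
    (lam : E → ℝ) (hlam : ∀ e, 0 ≤ lam e)
    (x : V → ℂ) (hx : ∀ v, x v ≠ 0 ∧ |(x v).arg| < π / 2) :
    (∑ M ∈ Finset.univ.filter fun M : Finset E => IsMatching M,
      (∏ e ∈ M, (lam e : ℂ)) * ∏ v : V, x v ^ deg M v) ≠ 0 := by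
  classical
  have hre : ∀ v, 0 < (x v).re := by
    intro v
    rcases Complex.abs_arg_lt_pi_div_two_iff.1 (hx v).2 with h | h
    · exact h
    · exact absurd h (hx v).1
  have hkey := HLaux.q_key ε₁ ε₂ lam x hlam hre Finset.univ
  have hset : Finset.univ.filter (fun M : Finset E => IsMatching M)
      = HLaux.mset ε₁ ε₂ Finset.univ := by
    ext M
    simp only [Finset.mem_filter, Finset.mem_univ, true_and, HLaux.mset, and_true]
    rw [hmatch M]
    simp [HLaux.Matchn]
  have hterm : ∀ M : Finset E, (∏ e ∈ M, (lam e : ℂ)) * ∏ v : V, x v ^ deg M v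
      = ∏ e ∈ M, ((lam e : ℂ) * (x (ε₁ e) * x (ε₂ e))) := by
    intro M
    rw [Finset.prod_mul_distrib, Finset.prod_mul_distrib]
    congr 1
    calc ∏ v : V, x v ^ deg M v
        = ∏ v : V, (x v ^ (M.filter fun e => ε₁ e = v).card *
            x v ^ (M.filter fun e => ε₂ e = v).card) := by
          refine Finset.prod_congr rfl fun v _ => ?_
          rw [hdeg, pow_add]
      _ = (∏ v : V, x v ^ (M.filter fun e => ε₁ e = v).card) *
            ∏ v : V, x v ^ (M.filter fun e => ε₂ e = v).card := Finset.prod_mul_distrib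
      _ = (∏ e ∈ M, x (ε₁ e)) * ∏ e ∈ M, x (ε₂ e) := by
          rw [HLaux.prod_pow_card, HLaux.prod_pow_card]
  have : (∑ M ∈ Finset.univ.filter fun M : Finset E => IsMatching M,
      (∏ e ∈ M, (lam e : ℂ)) * ∏ v : V, x v ^ deg M v)
      = HLaux.q ε₁ ε₂ lam x Finset.univ := by
    rw [hset]
    exact Finset.sum_congr rfl fun M _ => hterm M
  rw [this]
  exact hkey.1
end
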